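/- arXiv:2604.09723 — 15 statements merged into one kernel-verified Lean document; each statement's English description precedes it below -/
import Mathlib

section
/- Let c : ℕ → ℚ satisfy the first π-kernel recurrence, and let s : ℕ → ℚ be its partial-sum sequence. Then for every natural number n: −(n+2)⁴·s_n + (5n⁴ + 42n³ + 130n² + 173n + 81)·s_{n+1} − (n+1)(8n³ + 62n² + 160n + 137)·s_{n+2} + 4(n+1)(n+2)(n+3)²·s_{n+3} = 0. -/
/-- If `c` satisfies the first π-kernel recurrence and `s` is its partial-sum sequence,
then `s` satisfies (4 times) the first printed order-3 recurrence for π. -/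
theorem first_pi_order3_from_kernel (c s : ℕ → ℚ)
    (hc : ∀ n : ℕ, ((n : ℚ) + 1) ^ 4 * c n
        - (n : ℚ) * (2 * n + 3) * (2 * (n : ℚ) ^ 2 + 6 * n + 5) * c (n + 1)
        + 4 * (n : ℚ) * ((n : ℚ) + 1) * ((n : ℚ) + 2) ^ 2 * c (n + 2) = 0)
    (hs : ∀ n : ℕ, s n = ∑ k ∈ Finset.range (n + 1), c k) :
    ∀ n : ℕ,
      -((n : ℚ) + 2) ^ 4 * s n
      + (5 * (n : ℚ) ^ 4 + 42 * (n : ℚ) ^ 3 + 130 * (n : ℚ) ^ 2 + 173 * n + 81) * s (n + 1)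
      - ((n : ℚ) + 1) * (8 * (n : ℚ) ^ 3 + 62 * (n : ℚ) ^ 2 + 160 * n + 137) * s (n + 2)
      + 4 * ((n : ℚ) + 1) * ((n : ℚ) + 2) * ((n : ℚ) + 3) ^ 2 * s (n + 3) = 0 := by
  intro n
  have h := hc (n + 1)
  simp only [hs, Finset.sum_range_succ]
  push_cast at h ⊢
  linear_combination h
end

section
/- Let c : ℕ → ℚ satisfy the first π-kernel recurrence, and define u : ℕ → ℚ for n ≥ 1 by u_n = 4ⁿ·(n−1)!·(n!)²·c_n. Then for every natural number n ≥ 2: u_{n+1} = (2n+1)(2n² + 2n + 1)·u_n − 4n⁶·u_{n−1}. -/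
/-- If `c` satisfies the first π-kernel recurrence and `u n = 4^n·(n-1)!·(n!)²·c n`
for `n ≥ 1`, then `u` satisfies the inflated recurrence
`u (n+1) = (2n+1)(2n²+2n+1)·u n - 4n⁶·u (n-1)` for `n ≥ 2`,
i.e. the polynomial continued fraction `PCF((2n+1)(2n²+2n+1), -4n⁶)`. -/
theorem first_pi_kernel_inflation (c u : ℕ → ℚ)
    (hc : ∀ n : ℕ, ((n : ℚ) + 1) ^ 4 * c n
        - (n : ℚ) * (2 * n + 3) * (2 * (n : ℚ) ^ 2 + 6 * n + 5) * c (n + 1)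
        + 4 * (n : ℚ) * ((n : ℚ) + 1) * ((n : ℚ) + 2) ^ 2 * c (n + 2) = 0)
    (hu : ∀ n : ℕ, 1 ≤ n →
      u n = 4 ^ n * (Nat.factorial (n - 1) : ℚ) * (Nat.factorial n : ℚ) ^ 2 * c n) :
    ∀ n : ℕ, 2 ≤ n →
      u (n + 1) = (2 * (n : ℚ) + 1) * (2 * (n : ℚ) ^ 2 + 2 * n + 1) * u n
        - 4 * (n : ℚ) ^ 6 * u (n - 1) := by
  intro n hn
  obtain ⟨k, rfl⟩ : ∃ k, n = k + 2 := ⟨n - 2, by omega⟩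
  have h1 := hu (k + 1) (by omega)
  have h2 := hu (k + 2) (by omega)
  have h3 := hu (k + 3) (by omega)
  have hk := hc (k + 1)
  simp only [show k + 1 - 1 = k from rfl, show k + 2 - 1 = k + 1 from rfl,
    show k + 3 - 1 = k + 2 from rfl, show k + 1 + 1 = k + 2 from rfl,
    show k + 1 + 2 = k + 3 from rfl, show k + 2 + 1 = k + 3 from rfl,
    Nat.factorial_succ] at h1 h2 h3 hk ⊢
  rw [h1, h2, h3]
  push_cast at hk ⊢
  linear_combination (4 : ℚ) ^ (k + 2) * (Nat.factorial k : ℚ) *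
    (((k : ℚ) + 2) * (((k : ℚ) + 1) * (Nat.factorial k : ℚ))) ^ 2 * hk
end

section
/- Let c : ℕ → ℚ satisfy the second π-kernel recurrence, and let s : ℕ → ℚ be its partial-sum sequence. Then for every natural number n: −(n+2)³(3n+7)(3n+10)·s_n − (3n+10)(27n⁴ + 240n³ + 789n² + 1128n + 584)·s_{n+1} − (3n+4)(3n+8)(6n³ + 57n² + 177n + 178)·s_{n+2} + 16(n+3)³(3n+4)(3n+7)·s_{n+3} = 0. -/
/-- If `c` satisfies the second π-kernel recurrence and `s` is its partial-sum sequence,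
then `s` satisfies (144 times) the second printed order-3 recurrence for π. -/
theorem second_pi_order3_from_kernel (c s : ℕ → ℚ)
    (hc : ∀ n : ℕ, ((n : ℚ) + 1) ^ 3 * (3 * n + 4) * (3 * n + 7) * c n
        + (2 * (n : ℚ) + 3) * (3 * n + 1) * (3 * n + 7)
            * (5 * (n : ℚ) ^ 2 + 15 * n + 12) * c (n + 1)
        + 16 * ((n : ℚ) + 2) ^ 3 * (3 * n + 1) * (3 * n + 4) * c (n + 2) = 0)
    (hs : ∀ n : ℕ, s n = ∑ k ∈ Finset.range (n + 1), c k) :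
    ∀ n : ℕ,
      -((n : ℚ) + 2) ^ 3 * (3 * n + 7) * (3 * n + 10) * s n
      - (3 * (n : ℚ) + 10)
          * (27 * (n : ℚ) ^ 4 + 240 * (n : ℚ) ^ 3 + 789 * (n : ℚ) ^ 2 + 1128 * n + 584)
          * s (n + 1)
      - (3 * (n : ℚ) + 4) * (3 * n + 8)
          * (6 * (n : ℚ) ^ 3 + 57 * (n : ℚ) ^ 2 + 177 * n + 178) * s (n + 2)
      + 16 * ((n : ℚ) + 3) ^ 3 * (3 * n + 4) * (3 * n + 7) * s (n + 3) = 0 := by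
  have e : ∀ k : ℕ, c (k + 1) = s (k + 1) - s k := by
    intro k
    rw [hs, hs, Finset.sum_range_succ]
    ring
  intro n
  have key := hc (n + 1)
  have e1 : c (n + 1) = s (n + 1) - s n := e n
  have e2 : c (n + 2) = s (n + 2) - s (n + 1) := e (n + 1)
  have e3 : c (n + 3) = s (n + 3) - s (n + 2) := e (n + 2)
  have h12 : n + 1 + 1 = n + 2 := rfl
  have h13 : n + 1 + 2 = n + 3 := rfl
  rw [h12, h13, e1, e2, e3] at key
  push_cast at key ⊢
  linarith [key, sq_nonneg ((n : ℚ))]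
end

section
/- Let c : ℕ → ℚ satisfy the Catalan kernel recurrence, and let s : ℕ → ℚ be its partial-sum sequence. Then for every natural number n: −(n+2)(n+3)·s_n + (n+3)(5n+14)·s_{n+1} − (8n² + 52n + 85)·s_{n+2} + (2n+7)²·s_{n+3} = 0. -/
/-- If `c` satisfies the Catalan kernel recurrence and `s` is its partial-sum sequence,
then `s` satisfies (4 times) the printed order-3 recurrence for Catalan's constant. -/
theorem catalan_order3_from_kernel (c s : ℕ → ℚ)
    (hc : ∀ n : ℕ, ((n : ℚ) + 1) * ((n : ℚ) + 2) * c n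
        - 4 * ((n : ℚ) + 2) ^ 2 * c (n + 1)
        + (2 * (n : ℚ) + 5) ^ 2 * c (n + 2) = 0)
    (hs : ∀ n : ℕ, s n = ∑ k ∈ Finset.range (n + 1), c k) :
    ∀ n : ℕ,
      -((n : ℚ) + 2) * ((n : ℚ) + 3) * s n
      + ((n : ℚ) + 3) * (5 * (n : ℚ) + 14) * s (n + 1)
      - (8 * (n : ℚ) ^ 2 + 52 * n + 85) * s (n + 2)
      + (2 * (n : ℚ) + 7) ^ 2 * s (n + 3) = 0 := by
  intro n
  have hstep : ∀ m : ℕ, s (m + 1) = s m + c (m + 1) := fun m => by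
    rw [hs, hs, Finset.sum_range_succ]
  have e1 := hstep n
  have e2 := hstep (n + 1)
  have e3 := hstep (n + 2)
  have key := hc (n + 1)
  push_cast at key e2 e3 ⊢
  have h2 : n + 1 + 1 = n + 2 := rfl
  have h3 : n + 2 + 1 = n + 3 := rfl
  rw [h2] at e2 key
  rw [h3] at e3 key
  linear_combination key + (((n : ℚ) + 2) * ((n : ℚ) + 3)) * e1
    + (-4 * ((n : ℚ) + 3) ^ 2) * e2 + ((2 * (n : ℚ) + 7) ^ 2) * e3
end

section
/- Define A : ℕ → ℤ by A_n = ∑_{k=0}^n (binom(2k,k))²·(binom(2n−2k,n−k))². Then for every natural number n ≥ 1: (n+1)³·A_{n+1} = 8(2n+1)(2n² + 2n + 1)·A_n − 256·n³·A_{n−1}. -/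
open Finset

private def cbZ (j : ℕ) : ℤ := (Nat.centralBinom j : ℤ)
private def ctZ (j : ℕ) : ℤ := (catalan j : ℤ)

private lemma cb_ct1 (j : ℕ) : cbZ j = ((j : ℤ) + 1) * ctZ j := by
  unfold cbZ ctZ
  rw [← succ_mul_catalan_eq_centralBinom]
  push_cast
  ring

private lemma cb_ct2 (j : ℕ) : cbZ (j + 1) = 2 * (2 * (j : ℤ) + 1) * ctZ j := by
  have h : ((j : ℤ) + 1) * cbZ (j + 1) = 2 * (2 * (j : ℤ) + 1) * cbZ j := by
    unfold cbZ
    exact_mod_cast congrArg (Nat.cast : ℕ → ℤ) (Nat.succ_mul_centralBinom_succ j)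
  have hj : ((j : ℤ) + 1) ≠ 0 := by positivity
  apply mul_left_cancel₀ hj
  rw [h, cb_ct1 j]; ring

private lemma cb_zero : cbZ 0 = 1 := rfl
private lemma cb_one : cbZ 1 = 2 := rfl
private lemma ct_zero : ctZ 0 = 1 := by unfold ctZ; norm_num [catalan_zero]

/-- The convolution of squared central binomial coefficients. -/
private def Sm (n : ℕ) : ℤ := ∑ k ∈ Finset.range (n + 1), cbZ k ^ 2 * cbZ (n - k) ^ 2

/-- The WZ-style certificate for the telescoping proof. -/
private def Gc (m k : ℕ) : ℤ :=
  if k ≤ m + 1 then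
    4 * (k : ℤ) ^ 2 * (((m : ℤ) + 2) * (4 * m + 5) - 2 * k * (2 * m + 3)) * cbZ k ^ 2
      * ctZ (m + 1 - k) ^ 2
  else if k = m + 2 then -((m : ℤ) + 2) ^ 3 * cbZ (m + 2) ^ 2
  else 0

private lemma key (m : ℕ) :
    ((m : ℤ) + 2) ^ 3 * Sm (m + 2)
      = 8 * (2 * (m : ℤ) + 3) * (2 * (m : ℤ) ^ 2 + 6 * m + 5) * Sm (m + 1)
        - 256 * ((m : ℤ) + 1) ^ 3 * Sm m := by
  have tele : ∑ k ∈ Finset.range (m + 3), (Gc m (k + 1) - Gc m k)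
      = Gc m (m + 3) - Gc m 0 := Finset.sum_range_sub (Gc m) (m + 3)
  have hG0 : Gc m 0 = 0 := by
    unfold Gc
    rw [if_pos (by omega : 0 ≤ m + 1)]
    norm_num
  have hGtop : Gc m (m + 3) = 0 := by
    unfold Gc
    rw [if_neg (by omega), if_neg (by omega)]
  have main : ∑ k ∈ Finset.range (m + 3),
      (((m : ℤ) + 2) ^ 3 * (cbZ k ^ 2 * cbZ (m + 2 - k) ^ 2)
        - (if k ≤ m + 1 then
            8 * (2 * (m : ℤ) + 3) * (2 * (m : ℤ) ^ 2 + 6 * m + 5)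
              * (cbZ k ^ 2 * cbZ (m + 1 - k) ^ 2) else 0)
        + (if k ≤ m then 256 * ((m : ℤ) + 1) ^ 3 * (cbZ k ^ 2 * cbZ (m - k) ^ 2) else 0))
      = ∑ k ∈ Finset.range (m + 3), (Gc m (k + 1) - Gc m k) := by
    apply Finset.sum_congr rfl
    intro k hk
    rw [Finset.mem_range] at hk
    rcases (show k ≤ m ∨ k = m + 1 ∨ k = m + 2 by omega) with h | h | h
    · -- interior case
      set j := m - k with hj
      have hm : m = k + j := by omega
      have e2 : m + 2 - k = j + 2 := by omega
      have e1 : m + 1 - k = j + 1 := by omega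
      have e1' : m + 1 - (k + 1) = j := by omega
      rw [if_pos (show k ≤ m + 1 by omega), if_pos h]
      unfold Gc
      rw [if_pos (show k + 1 ≤ m + 1 by omega), if_pos (show k ≤ m + 1 by omega),
        e2, e1, e1']
      have h6 : cbZ (j + 2) = 2 * (2 * (j : ℤ) + 3) * ctZ (j + 1) := by
        have := cb_ct2 (j + 1); push_cast at this; linear_combination this
      have h5 : cbZ (j + 1) = ((j : ℤ) + 2) * ctZ (j + 1) := by
        have := cb_ct1 (j + 1); push_cast at this; linear_combination this
      have h3 : cbZ j = ((j : ℤ) + 1) * ctZ j := cb_ct1 j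
      have h2 : cbZ (k + 1) = 2 * (2 * (k : ℤ) + 1) * ctZ k := cb_ct2 k
      have h1 : cbZ k = ((k : ℤ) + 1) * ctZ k := cb_ct1 k
      have huv : ((j : ℤ) + 2) * ctZ (j + 1) = 2 * (2 * (j : ℤ) + 1) * ctZ j := by
        rw [← h5, cb_ct2 j]
      have huv2 : ((j : ℤ) + 2) ^ 2 * ctZ (j + 1) ^ 2
          = 4 * (2 * (j : ℤ) + 1) ^ 2 * ctZ j ^ 2 := by
        linear_combination (((j : ℤ) + 2) * ctZ (j + 1) + 2 * (2 * (j : ℤ) + 1) * ctZ j) * huv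
      have hmz : (m : ℤ) = (k : ℤ) + (j : ℤ) := by exact_mod_cast congrArg (Nat.cast : ℕ → ℤ) hm
      rw [h6, h5, h3, h2, h1, hmz]
      push_cast
      linear_combination
        (-(16 * (k : ℤ) ^ 3 + 48 * (k : ℤ) ^ 2 * (j : ℤ) + 80 * (k : ℤ) ^ 2
            + 48 * (k : ℤ) * (j : ℤ) ^ 2 + 144 * (k : ℤ) * (j : ℤ) + 116 * (k : ℤ)
            + 16 * (j : ℤ) ^ 3 + 64 * (j : ℤ) ^ 2 + 92 * (j : ℤ) + 48)
          * ((k : ℤ) + 1) ^ 2 * ctZ k ^ 2) * huv2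
    · -- k = m + 1
      subst h
      rw [if_pos (le_refl (m + 1)), if_neg (by omega : ¬ m + 1 ≤ m)]
      unfold Gc
      rw [if_neg (by omega : ¬ m + 1 + 1 ≤ m + 1), if_pos (by omega : m + 1 + 1 = m + 2),
        if_pos (le_refl (m + 1))]
      have e2 : m + 2 - (m + 1) = 1 := by omega
      have e1 : m + 1 - (m + 1) = 0 := by omega
      rw [e2, e1, cb_one, cb_zero, ct_zero]
      have hA : cbZ (m + 2) = 2 * (2 * ((m : ℤ) + 1) + 1) * ctZ (m + 1) := by
        have := cb_ct2 (m + 1); push_cast at this; linear_combination this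
      have hB : cbZ (m + 1) = ((m : ℤ) + 2) * ctZ (m + 1) := by
        have := cb_ct1 (m + 1); push_cast at this; linear_combination this
      rw [hA, hB]
      push_cast
      ring
    · -- k = m + 2
      subst h
      rw [if_neg (by omega : ¬ m + 2 ≤ m + 1), if_neg (by omega : ¬ m + 2 ≤ m)]
      unfold Gc
      rw [if_neg (by omega : ¬ m + 2 + 1 ≤ m + 1), if_neg (by omega : ¬ m + 2 + 1 = m + 2),
        if_neg (by omega : ¬ m + 2 ≤ m + 1), if_pos rfl]
      have e2 : m + 2 - (m + 2) = 0 := by omega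
      rw [e2, cb_zero]
      ring
  rw [tele, hGtop, hG0, sub_zero] at main
  -- split the sum in `main`
  have s2 : ∑ k ∈ Finset.range (m + 3),
      ((m : ℤ) + 2) ^ 3 * (cbZ k ^ 2 * cbZ (m + 2 - k) ^ 2)
      = ((m : ℤ) + 2) ^ 3 * Sm (m + 2) := by
    rw [Sm, Finset.mul_sum]
  have s1 : ∑ k ∈ Finset.range (m + 3),
      (if k ≤ m + 1 then
        8 * (2 * (m : ℤ) + 3) * (2 * (m : ℤ) ^ 2 + 6 * m + 5)
          * (cbZ k ^ 2 * cbZ (m + 1 - k) ^ 2) else 0)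
      = 8 * (2 * (m : ℤ) + 3) * (2 * (m : ℤ) ^ 2 + 6 * m + 5) * Sm (m + 1) := by
    rw [show m + 3 = (m + 2) + 1 from rfl, Finset.sum_range_succ,
      if_neg (by omega : ¬ m + 2 ≤ m + 1), add_zero, Sm, Finset.mul_sum]
    apply Finset.sum_congr rfl
    intro k hk
    rw [Finset.mem_range] at hk
    rw [if_pos (by omega : k ≤ m + 1)]
  have s0 : ∑ k ∈ Finset.range (m + 3),
      (if k ≤ m then 256 * ((m : ℤ) + 1) ^ 3 * (cbZ k ^ 2 * cbZ (m - k) ^ 2) else 0)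
      = 256 * ((m : ℤ) + 1) ^ 3 * Sm m := by
    rw [show m + 3 = (m + 1) + 1 + 1 from rfl, Finset.sum_range_succ, Finset.sum_range_succ,
      if_neg (by omega : ¬ m + 1 + 1 ≤ m), if_neg (by omega : ¬ m + 1 ≤ m), add_zero, add_zero,
      Sm, Finset.mul_sum]
    apply Finset.sum_congr rfl
    intro k hk
    rw [Finset.mem_range] at hk
    rw [if_pos (by omega : k ≤ m)]
  rw [Finset.sum_add_distrib, Finset.sum_sub_distrib, s2, s1, s0] at main
  linarith [main]

private lemma A_eq_Sm (A : ℕ → ℤ)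
    (hA : ∀ n : ℕ, A n = ∑ k ∈ Finset.range (n + 1),
      ((2 * k).choose k : ℤ) ^ 2 * ((2 * n - 2 * k).choose (n - k) : ℤ) ^ 2)
    (x : ℕ) : A x = Sm x := by
  rw [hA, Sm]
  apply Finset.sum_congr rfl
  intro k hk
  rw [Finset.mem_range] at hk
  have h : 2 * x - 2 * k = 2 * (x - k) := by omega
  rw [h]
  rfl

/-- The sequence `A n = ∑_{k=0}^n binom(2k,k)²·binom(2n-2k,n-k)²` (OEIS A036917)
satisfies `(n+1)³·A(n+1) = 8(2n+1)(2n²+2n+1)·A n - 256·n³·A(n-1)` for `n ≥ 1`. -/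
theorem A036917_recurrence
    (A : ℕ → ℤ)
    (hA : ∀ n : ℕ, A n = ∑ k ∈ Finset.range (n + 1),
      ((2 * k).choose k : ℤ) ^ 2 * ((2 * n - 2 * k).choose (n - k) : ℤ) ^ 2) :
    ∀ n : ℕ, 1 ≤ n →
      ((n : ℤ) + 1) ^ 3 * A (n + 1)
        = 8 * (2 * (n : ℤ) + 1) * (2 * (n : ℤ) ^ 2 + 2 * n + 1) * A n
          - 256 * (n : ℤ) ^ 3 * A (n - 1) := by
  intro n hn
  obtain ⟨m, rfl⟩ : ∃ m, n = m + 1 := ⟨n - 1, by omega⟩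
  have e : m + 1 - 1 = m := by omega
  rw [A_eq_Sm A hA, A_eq_Sm A hA, e, A_eq_Sm A hA]
  have h := key m
  push_cast
  linear_combination h
end

section
/- For every natural number n: ∑_{k=0}^n (binom(2k,k))²·(binom(2n−2k,n−k))² = ∑_{m=0}^n (binom(2m,m))³·(−16)^{n−m}·binom(m, n−m), where binom(m, n−m) = 0 whenever n−m > m. Both sides are integers. -/
def cc (m : ℕ) : ℤ := ((2*m).choose m : ℤ)

lemma cc_rec (m : ℕ) : ((m:ℤ)+1) * cc (m+1) = 2*(2*(m:ℤ)+1) * cc m := by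
  have h := Nat.succ_mul_centralBinom_succ m
  simp only [Nat.centralBinom] at h
  have h2 : (((m+1) * (2*(m+1)).choose (m+1) : ℕ) : ℤ)
      = ((2 * (2*m+1) * (2*m).choose m : ℕ) : ℤ) := by exact_mod_cast congrArg Nat.cast h
  unfold cc
  push_cast at h2 ⊢
  linarith [h2]

lemma hVsq (k : ℕ) : ((k:ℤ)+1)^2 * cc (k+1)^2 = 4*(2*(k:ℤ)+1)^2 * cc k^2 := by
  have h := cc_rec k
  linear_combination (((k:ℤ)+1) * cc (k+1) + 2*(2*(k:ℤ)+1) * cc k) * h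

lemma hCcube (m : ℕ) : ((m:ℤ)+1)^3 * cc (m+1)^3 = 8*(2*(m:ℤ)+1)^3 * cc m^3 := by
  have h := cc_rec m
  linear_combination ((((m:ℤ)+1) * cc (m+1))^2 + (((m:ℤ)+1) * cc (m+1)) * (2*(2*(m:ℤ)+1) * cc m)
    + (2*(2*(m:ℤ)+1) * cc m)^2) * h

def AA (n k : ℕ) : ℤ := if k ≤ n then cc k^2 * cc (n-k)^2 else 0
def BB (n m : ℕ) : ℤ := if m ≤ n then cc m^3 * (-16)^(n-m) * ((m.choose (n-m) : ℕ) : ℤ) else 0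
noncomputable def aa (n : ℕ) : ℤ := ∑ k ∈ Finset.range (n+1), AA n k
noncomputable def bb (n : ℕ) : ℤ := ∑ m ∈ Finset.range (n+1), BB n m

def g2 (n k : ℕ) : ℤ :=
  if k ≤ n then (k:ℤ)^2 * cc k^2 * (16*(3*(n:ℤ)-2*(k:ℤ)+1) * cc (n-k)^2
      + (2*(k:ℤ)-3*(n:ℤ)-3) * cc (n-k+1)^2)
  else if k = n+1 then -((n:ℤ)+1)^3 * cc (n+1)^2
  else 0

def gb (n m : ℕ) : ℤ :=
  if m ≤ n then 16*(m:ℤ)^3 * cc m^3 * (-16)^(n-m) * ((((m-1).choose (n-m+1) : ℕ) : ℤ)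
      + 2*(((m-1).choose (n-m) : ℕ) : ℤ))
  else if m = n+1 then -8*(2*(n:ℤ)+1)^3 * cc n^3
  else 0

lemma AA_of_le {n k : ℕ} (h : k ≤ n) : AA n k = cc k^2 * cc (n-k)^2 := if_pos h
lemma AA_of_gt {n k : ℕ} (h : n < k) : AA n k = 0 := if_neg (by omega)
lemma BB_of_le {n m : ℕ} (h : m ≤ n) :
    BB n m = cc m^3 * (-16)^(n-m) * ((m.choose (n-m) : ℕ) : ℤ) := if_pos h
lemma BB_of_gt {n m : ℕ} (h : n < m) : BB n m = 0 := if_neg (by omega)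
lemma g2_of_le {n k : ℕ} (h : k ≤ n) :
    g2 n k = (k:ℤ)^2 * cc k^2 * (16*(3*(n:ℤ)-2*(k:ℤ)+1) * cc (n-k)^2
      + (2*(k:ℤ)-3*(n:ℤ)-3) * cc (n-k+1)^2) := if_pos h
lemma g2_top (n : ℕ) : g2 n (n+1) = -((n:ℤ)+1)^3 * cc (n+1)^2 := by
  unfold g2; rw [if_neg (by omega), if_pos rfl]
lemma g2_of_gt {n k : ℕ} (h : n+1 < k) : g2 n k = 0 := by
  unfold g2; rw [if_neg (by omega), if_neg (by omega)]
lemma g2_zero (n : ℕ) : g2 n 0 = 0 := by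
  unfold g2; rw [if_pos (by omega)]; push_cast; ring
lemma gb_of_le {n m : ℕ} (h : m ≤ n) :
    gb n m = 16*(m:ℤ)^3 * cc m^3 * (-16)^(n-m) * ((((m-1).choose (n-m+1) : ℕ) : ℤ)
      + 2*(((m-1).choose (n-m) : ℕ) : ℤ)) := if_pos h
lemma gb_top (n : ℕ) : gb n (n+1) = -8*(2*(n:ℤ)+1)^3 * cc n^3 := by
  unfold gb; rw [if_neg (by omega), if_pos rfl]
lemma gb_of_gt {n m : ℕ} (h : n+1 < m) : gb n m = 0 := by
  unfold gb; rw [if_neg (by omega), if_neg (by omega)]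
lemma gb_zero (n : ℕ) : gb n 0 = 0 := by
  unfold gb; rw [if_pos (by omega)]; push_cast; ring

lemma ptA (N k : ℕ) :
    ((N:ℤ)+2)^3 * AA (N+2) k - 8*(2*(N:ℤ)+3)*(2*(N:ℤ)^2+6*(N:ℤ)+5) * AA (N+1) k
      + 256*((N:ℤ)+1)^3 * AA N k = g2 (N+1) (k+1) - g2 (N+1) k := by
  by_cases hk : k ≤ N
  · obtain ⟨i, rfl⟩ : ∃ i, N = k + i := ⟨N - k, by omega⟩
    rw [AA_of_le (by omega), AA_of_le (by omega), AA_of_le (by omega),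
        g2_of_le (by omega : k+1 ≤ k+i+1), g2_of_le (by omega : k ≤ k+i+1)]
    simp only [show k+i+2-k = i+2 from by omega, show k+i+1-k = i+1 from by omega,
        show k+i-k = i from by omega, show k+i+1-(k+1) = i from by omega,
        show i+1+1 = i+2 from rfl]
    have hV := hVsq k
    have hZ := hVsq (i+1)
    have hY := hVsq i
    simp only [show i+1+1 = i+2 from rfl] at hZ
    push_cast at hZ hY ⊢
    have hne : ((i:ℤ)+1)^2*((i:ℤ)+2)^2*((k:ℤ)+1)^2 ≠ 0 := by positivity
    refine mul_left_cancel₀ hne ?_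
    linear_combination ((16*cc (i+1)^2) + (-128*cc i^2) + (60*(i:ℤ)*cc (i+1)^2) + (-576*(i:ℤ)*cc i^2) + (88*(i:ℤ)^2*cc (i+1)^2) + (-992*(i:ℤ)^2*cc i^2) + (63*(i:ℤ)^3*cc (i+1)^2) + (-816*(i:ℤ)^3*cc i^2) + (22*(i:ℤ)^4*cc (i+1)^2) + (-320*(i:ℤ)^4*cc i^2) + (3*(i:ℤ)^5*cc (i+1)^2) + (-48*(i:ℤ)^5*cc i^2) + (36*(k:ℤ)*cc (i+1)^2) + (-320*(k:ℤ)*cc i^2) + (132*(k:ℤ)*(i:ℤ)*cc (i+1)^2) + (-1344*(k:ℤ)*(i:ℤ)*cc i^2) + (189*(k:ℤ)*(i:ℤ)^2*cc (i+1)^2) + (-2192*(k:ℤ)*(i:ℤ)^2*cc i^2) + (132*(k:ℤ)*(i:ℤ)^3*cc (i+1)^2) + (-1728*(k:ℤ)*(i:ℤ)^3*cc i^2) + (45*(k:ℤ)*(i:ℤ)^4*cc (i+1)^2) + (-656*(k:ℤ)*(i:ℤ)^4*cc i^2) + (6*(k:ℤ)*(i:ℤ)^5*cc (i+1)^2) +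 (-96*(k:ℤ)*(i:ℤ)^5*cc i^2) + (24*(k:ℤ)^2*cc (i+1)^2) + (-256*(k:ℤ)^2*cc i^2) + (84*(k:ℤ)^2*(i:ℤ)*cc (i+1)^2) + (-960*(k:ℤ)^2*(i:ℤ)*cc i^2) + (114*(k:ℤ)^2*(i:ℤ)^2*cc (i+1)^2) + (-1408*(k:ℤ)^2*(i:ℤ)^2*cc i^2) + (75*(k:ℤ)^2*(i:ℤ)^3*cc (i+1)^2) + (-1008*(k:ℤ)^2*(i:ℤ)^3*cc i^2) + (24*(k:ℤ)^2*(i:ℤ)^4*cc (i+1)^2) + (-352*(k:ℤ)^2*(i:ℤ)^4*cc i^2) + (3*(k:ℤ)^2*(i:ℤ)^5*cc (i+1)^2) + (-48*(k:ℤ)^2*(i:ℤ)^5*cc i^2) + (4*(k:ℤ)^3*cc (i+1)^2) + (-64*(k:ℤ)^3*cc i^2) + (12*(k:ℤ)^3*(i:ℤ)*cc (i+1)^2) + (-192*(k:ℤ)^3*(i:ℤ)*cc i^2) + (13*(k:ℤ)^3*(i:ℤ)^2*cc (i+1)^2) + (-208*(k:ℤ)^3*(i:ℤ)^2*cc i^2)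 + (6*(k:ℤ)^3*(i:ℤ)^3*cc (i+1)^2) + (-96*(k:ℤ)^3*(i:ℤ)^3*cc i^2) + (1*(k:ℤ)^3*(i:ℤ)^4*cc (i+1)^2) + (-16*(k:ℤ)^3*(i:ℤ)^4*cc i^2)) * hV + ((8*cc k^2) + (28*(i:ℤ)*cc k^2) + (38*(i:ℤ)^2*cc k^2) + (25*(i:ℤ)^3*cc k^2) + (8*(i:ℤ)^4*cc k^2) + (1*(i:ℤ)^5*cc k^2) + (28*(k:ℤ)*cc k^2) + (92*(k:ℤ)*(i:ℤ)*cc k^2) + (115*(k:ℤ)*(i:ℤ)^2*cc k^2) + (68*(k:ℤ)*(i:ℤ)^3*cc k^2) + (19*(k:ℤ)*(i:ℤ)^4*cc k^2) + (2*(k:ℤ)*(i:ℤ)^5*cc k^2) + (32*(k:ℤ)^2*cc k^2) + (100*(k:ℤ)^2*(i:ℤ)*cc k^2) + (116*(k:ℤ)^2*(i:ℤ)^2*cc k^2) + (61*(k:ℤ)^2*(i:ℤ)^3*cc k^2) + (14*(k:ℤ)^2*(i:ℤ)^4*cc k^2) + (1*(k:ℤ)^2*(i:ℤ)^5*cc k^2)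 + (12*(k:ℤ)^3*cc k^2) + (36*(k:ℤ)^3*(i:ℤ)*cc k^2) + (39*(k:ℤ)^3*(i:ℤ)^2*cc k^2) + (18*(k:ℤ)^3*(i:ℤ)^3*cc k^2) + (3*(k:ℤ)^3*(i:ℤ)^4*cc k^2)) * hZ + ((-128*cc k^2) + (-448*(i:ℤ)*cc k^2) + (-608*(i:ℤ)^2*cc k^2) + (-400*(i:ℤ)^3*cc k^2) + (-128*(i:ℤ)^4*cc k^2) + (-16*(i:ℤ)^5*cc k^2) + (-448*(k:ℤ)*cc k^2) + (-1472*(k:ℤ)*(i:ℤ)*cc k^2) + (-1840*(k:ℤ)*(i:ℤ)^2*cc k^2) + (-1088*(k:ℤ)*(i:ℤ)^3*cc k^2) + (-304*(k:ℤ)*(i:ℤ)^4*cc k^2) + (-32*(k:ℤ)*(i:ℤ)^5*cc k^2) + (-512*(k:ℤ)^2*cc k^2) + (-1600*(k:ℤ)^2*(i:ℤ)*cc k^2) + (-1856*(k:ℤ)^2*(i:ℤ)^2*cc k^2) + (-976*(k:ℤ)^2*(i:ℤ)^3*cc k^2) + (-224*(k:ℤ)^2*(i:ℤ)^4*cc k^2)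 + (-16*(k:ℤ)^2*(i:ℤ)^5*cc k^2) + (-192*(k:ℤ)^3*cc k^2) + (-576*(k:ℤ)^3*(i:ℤ)*cc k^2) + (-624*(k:ℤ)^3*(i:ℤ)^2*cc k^2) + (-288*(k:ℤ)^3*(i:ℤ)^3*cc k^2) + (-48*(k:ℤ)^3*(i:ℤ)^4*cc k^2)) * hY
  · by_cases hk1 : k = N+1
    · subst hk1
      rw [AA_of_le (by omega), AA_of_le (by omega), AA_of_gt (by omega),
          g2_top (N+1), g2_of_le (by omega : N+1 ≤ N+1)]
      simp only [show N+2-(N+1) = 1 from by omega, show N+1-(N+1) = 0 from by omega,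
          show N+1+1 = N+2 from rfl]
      have hV := hVsq (N+1)
      simp only [show N+1+1 = N+2 from rfl] at hV
      have hc0 : cc 0 = 1 := by decide
      have hc1 : cc 1 = 2 := by decide
      rw [hc0, hc1]
      push_cast at hV ⊢
      linear_combination (((N:ℤ)+2)) * hV
    · by_cases hk2 : k = N+2
      · subst hk2
        rw [AA_of_le (by omega), AA_of_gt (by omega), AA_of_gt (by omega),
            g2_of_gt (by omega), g2_top (N+1)]
        simp only [show N+2-(N+2) = 0 from by omega, show N+1+1 = N+2 from rfl]
        have hc0 : cc 0 = 1 := by decide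
        rw [hc0]
        push_cast
        ring
      · rw [AA_of_gt (by omega), AA_of_gt (by omega), AA_of_gt (by omega),
            g2_of_gt (by omega), g2_of_gt (by omega)]
        ring

lemma ptB (N m : ℕ) :
    ((N:ℤ)+2)^3 * BB (N+2) m - 8*(2*(N:ℤ)+3)*(2*(N:ℤ)^2+6*(N:ℤ)+5) * BB (N+1) m
      + 256*((N:ℤ)+1)^3 * BB N m = gb (N+1) (m+1) - gb (N+1) m := by
  by_cases hm : m ≤ N
  · obtain ⟨i, rfl⟩ : ∃ i, N = m + i := ⟨N - m, by omega⟩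
    rw [BB_of_le (by omega), BB_of_le (by omega), BB_of_le (by omega),
        gb_of_le (by omega : m+1 ≤ m+i+1), gb_of_le (by omega : m ≤ m+i+1)]
    simp only [show m+i+2-m = i+2 from by omega, show m+i+1-m = i+1 from by omega,
        show m+i-m = i from by omega, show m+i+1-(m+1) = i from by omega,
        show m+1-1 = m from by omega, show i+1+1 = i+2 from rfl]
    have hC := hCcube m
    by_cases him : i+2 ≤ m
    · have h1 := Nat.choose_succ_right_eq m (i+1)
      have h2 := Nat.choose_succ_right_eq m i
      have h3 := Nat.add_one_mul_choose_eq (m-1) (i+1)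
      have h5 := Nat.choose_succ_right_eq (m-1) (i+1)
      simp only [show i+1+1 = i+2 from rfl, Nat.succ_eq_add_one,
          show m-1+1 = m from by omega] at h1 h2 h3 h5
      zify [show i+1 ≤ m from by omega, show i ≤ m from by omega,
          show i+1 ≤ m-1 from by omega, show 1 ≤ m from by omega] at h1 h2 h3 h5
      have hm0 : (0:ℤ) < (m:ℤ) := by exact_mod_cast (show 0 < m from by omega)
      have hp1 : (0:ℤ) < (i:ℤ)+1 := by positivity
      have hp2 : (0:ℤ) < (i:ℤ)+2 := by positivity
      have hne : ((i:ℤ)+1)*((i:ℤ)+2)*(m:ℤ) ≠ 0 :=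
        ne_of_gt (mul_pos (mul_pos hp1 hp2) hm0)
      refine mul_left_cancel₀ hne ?_
      push_cast
      linear_combination ((-64*(m:ℤ)*((m.choose i : ℕ) : ℤ)*(-16:ℤ)^i) + (-32*(m:ℤ)*((m.choose (i+1) : ℕ) : ℤ)*(-16:ℤ)^i) + (-96*(m:ℤ)*(i:ℤ)*((m.choose i : ℕ) : ℤ)*(-16:ℤ)^i) + (-48*(m:ℤ)*(i:ℤ)*((m.choose (i+1) : ℕ) : ℤ)*(-16:ℤ)^i) + (-32*(m:ℤ)*(i:ℤ)^2*((m.choose i : ℕ) : ℤ)*(-16:ℤ)^i) + (-16*(m:ℤ)*(i:ℤ)^2*((m.choose (i+1) : ℕ) : ℤ)*(-16:ℤ)^i)) * hC + ((-256*(m:ℤ)^4*(-16:ℤ)^i*cc m^3) + (-256*(m:ℤ)^4*(i:ℤ)*(-16:ℤ)^i*cc m^3)) * h5 + ((-512*(m:ℤ)^3*(-16:ℤ)^i*cc m^3) + (-768*(m:ℤ)^3*(i:ℤ)*(-16:ℤ)^i*cc m^3) + (-256*(m:ℤ)^3*(i:ℤ)^2*(-16:ℤ)^i*cc m^3) + (-256*(m:ℤ)^4*(-16:ℤ)^i*cc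 m^3) + (-256*(m:ℤ)^4*(i:ℤ)*(-16:ℤ)^i*cc m^3)) * h3 + ((2048*(m:ℤ)*(-16:ℤ)^i*cc m^3) + (5120*(m:ℤ)*(i:ℤ)*(-16:ℤ)^i*cc m^3) + (4608*(m:ℤ)*(i:ℤ)^2*(-16:ℤ)^i*cc m^3) + (1792*(m:ℤ)*(i:ℤ)^3*(-16:ℤ)^i*cc m^3) + (256*(m:ℤ)*(i:ℤ)^4*(-16:ℤ)^i*cc m^3) + (3072*(m:ℤ)^2*(-16:ℤ)^i*cc m^3) + (6144*(m:ℤ)^2*(i:ℤ)*(-16:ℤ)^i*cc m^3) + (3840*(m:ℤ)^2*(i:ℤ)^2*(-16:ℤ)^i*cc m^3) + (768*(m:ℤ)^2*(i:ℤ)^3*(-16:ℤ)^i*cc m^3) + (1024*(m:ℤ)^3*(-16:ℤ)^i*cc m^3) + (1536*(m:ℤ)^3*(i:ℤ)*(-16:ℤ)^i*cc m^3) + (512*(m:ℤ)^3*(i:ℤ)^2*(-16:ℤ)^i*cc m^3)) * h1 + ((1536*(m:ℤ)*(-16:ℤ)^i*cc m^3) + (3840*(m:ℤ)*(i:ℤ)*(-16:ℤ)^i*cc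 m^3) + (3584*(m:ℤ)*(i:ℤ)^2*(-16:ℤ)^i*cc m^3) + (1536*(m:ℤ)*(i:ℤ)^3*(-16:ℤ)^i*cc m^3) + (256*(m:ℤ)*(i:ℤ)^4*(-16:ℤ)^i*cc m^3) + (4608*(m:ℤ)^2*(-16:ℤ)^i*cc m^3) + (8960*(m:ℤ)^2*(i:ℤ)*(-16:ℤ)^i*cc m^3) + (5376*(m:ℤ)^2*(i:ℤ)^2*(-16:ℤ)^i*cc m^3) + (1024*(m:ℤ)^2*(i:ℤ)^3*(-16:ℤ)^i*cc m^3) + (3584*(m:ℤ)^3*(-16:ℤ)^i*cc m^3) + (5376*(m:ℤ)^3*(i:ℤ)*(-16:ℤ)^i*cc m^3) + (1792*(m:ℤ)^3*(i:ℤ)^2*(-16:ℤ)^i*cc m^3)) * h2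
    · by_cases him2 : i+1 = m
      · subst him2
        simp only [show i+1-1 = i from by omega,
            show (i+1).choose (i+2) = 0 from Nat.choose_eq_zero_of_lt (by omega),
            Nat.choose_self, show (i+1).choose i = i+1 from Nat.choose_succ_self_right i,
            show i.choose (i+1) = 0 from Nat.choose_eq_zero_of_lt (by omega),
            show i.choose (i+2) = 0 from Nat.choose_eq_zero_of_lt (by omega)]
        push_cast at hC ⊢
        linear_combination (-16*(2*(i:ℤ)+3)*(-16:ℤ)^i) * hC
      · by_cases him3 : i = m
        · subst him3
          simp only [show i.choose (i+2) = 0 from Nat.choose_eq_zero_of_lt (by omega),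
              show i.choose (i+1) = 0 from Nat.choose_eq_zero_of_lt (by omega),
              Nat.choose_self,
              show (i-1).choose (i+1) = 0 from Nat.choose_eq_zero_of_lt (by omega),
              show (i-1).choose (i+2) = 0 from Nat.choose_eq_zero_of_lt (by omega)]
          push_cast at hC ⊢
          linear_combination (-32*(-16:ℤ)^i) * hC
        · simp only [show m.choose i = 0 from Nat.choose_eq_zero_of_lt (by omega),
              show m.choose (i+1) = 0 from Nat.choose_eq_zero_of_lt (by omega),
              show m.choose (i+2) = 0 from Nat.choose_eq_zero_of_lt (by omega),
              show (m-1).choose (i+1) = 0 from Nat.choose_eq_zero_of_lt (by omega),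
              show (m-1).choose (i+2) = 0 from Nat.choose_eq_zero_of_lt (by omega)]
          push_cast
          ring
  · by_cases hm1 : m = N+1
    · subst hm1
      rw [BB_of_le (by omega), BB_of_le (by omega), BB_of_gt (by omega),
          gb_top (N+1), gb_of_le (by omega : N+1 ≤ N+1)]
      simp only [show N+2-(N+1) = 1 from by omega, show N+1-(N+1) = 0 from by omega,
          show N+1+1 = N+2 from rfl, show N+1-1 = N from by omega, zero_add,
          Nat.choose_one_right, Nat.choose_zero_right, Nat.choose_self]
      push_cast
      ring
    · by_cases hm2 : m = N+2
      · subst hm2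
        rw [BB_of_le (by omega), BB_of_gt (by omega), BB_of_gt (by omega),
            gb_of_gt (by omega), gb_top (N+1)]
        simp only [show N+2-(N+2) = 0 from by omega, Nat.choose_zero_right,
            show N+1+1 = N+2 from rfl]
        have hC := hCcube (N+1)
        simp only [show N+1+1 = N+2 from rfl] at hC
        push_cast at hC ⊢
        linear_combination hC
      · rw [BB_of_gt (by omega), BB_of_gt (by omega), BB_of_gt (by omega),
            gb_of_gt (by omega), gb_of_gt (by omega)]
        ring

lemma aa_ext (n r : ℕ) (h : n+1 ≤ r) : aa n = ∑ k ∈ Finset.range r, AA n k := by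
  unfold aa
  refine Finset.sum_subset (Finset.range_subset_range.2 h) ?_
  intro x _ hx
  exact AA_of_gt (by simp only [Finset.mem_range] at hx; omega)

lemma bb_ext (n r : ℕ) (h : n+1 ≤ r) : bb n = ∑ m ∈ Finset.range r, BB n m := by
  unfold bb
  refine Finset.sum_subset (Finset.range_subset_range.2 h) ?_
  intro x _ hx
  exact BB_of_gt (by simp only [Finset.mem_range] at hx; omega)

lemma recA (N : ℕ) :
    ((N:ℤ)+2)^3 * aa (N+2) - 8*(2*(N:ℤ)+3)*(2*(N:ℤ)^2+6*(N:ℤ)+5) * aa (N+1)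
      + 256*((N:ℤ)+1)^3 * aa N = 0 := by
  rw [aa_ext (N+2) (N+4) (by omega), aa_ext (N+1) (N+4) (by omega), aa_ext N (N+4) (by omega),
      Finset.mul_sum, Finset.mul_sum, Finset.mul_sum, ← Finset.sum_sub_distrib,
      ← Finset.sum_add_distrib]
  have tele : ∑ k ∈ Finset.range (N+4),
      (((N:ℤ)+2)^3 * AA (N+2) k - 8*(2*(N:ℤ)+3)*(2*(N:ℤ)^2+6*(N:ℤ)+5) * AA (N+1) k
        + 256*((N:ℤ)+1)^3 * AA N k)
      = g2 (N+1) (N+4) - g2 (N+1) 0 := by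
    rw [Finset.sum_congr rfl (fun k _ => ptA N k)]
    exact Finset.sum_range_sub (g2 (N+1)) (N+4)
  rw [tele, g2_of_gt (by omega), g2_zero]
  ring

lemma recB (N : ℕ) :
    ((N:ℤ)+2)^3 * bb (N+2) - 8*(2*(N:ℤ)+3)*(2*(N:ℤ)^2+6*(N:ℤ)+5) * bb (N+1)
      + 256*((N:ℤ)+1)^3 * bb N = 0 := by
  rw [bb_ext (N+2) (N+4) (by omega), bb_ext (N+1) (N+4) (by omega), bb_ext N (N+4) (by omega),
      Finset.mul_sum, Finset.mul_sum, Finset.mul_sum, ← Finset.sum_sub_distrib,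
      ← Finset.sum_add_distrib]
  have tele : ∑ m ∈ Finset.range (N+4),
      (((N:ℤ)+2)^3 * BB (N+2) m - 8*(2*(N:ℤ)+3)*(2*(N:ℤ)^2+6*(N:ℤ)+5) * BB (N+1) m
        + 256*((N:ℤ)+1)^3 * BB N m)
      = gb (N+1) (N+4) - gb (N+1) 0 := by
    rw [Finset.sum_congr rfl (fun m _ => ptB N m)]
    exact Finset.sum_range_sub (gb (N+1)) (N+4)
  rw [tele, gb_of_gt (by omega), gb_zero]
  ring

lemma aa_eq_bb (n : ℕ) : aa n = bb n := by
  have key : ∀ n : ℕ, aa n = bb n ∧ aa (n+1) = bb (n+1) := by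
    intro n
    induction n with
    | zero =>
      constructor
      · show aa 0 = bb 0
        unfold aa bb
        simp [Finset.sum_range_succ, AA, BB]
        decide
      · show aa 1 = bb 1
        unfold aa bb
        simp [Finset.sum_range_succ, AA, BB]
        decide
    | succ N ih =>
      refine ⟨ih.2, ?_⟩
      have hA := recA N
      have hB := recB N
      rw [ih.1, ih.2] at hA
      have h2 : ((N:ℤ)+2)^3 * aa (N+2) = ((N:ℤ)+2)^3 * bb (N+2) := by linarith
      have hne : ((N:ℤ)+2)^3 ≠ 0 := by positivity
      exact mul_left_cancel₀ hne h2
  exact (key n).1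

/-- Coefficient-level form of the Clausen-type pullback identity
`₂F₁(1/2,1/2;1;16x)² = ₃F₂(1/2,1/2,1/2;1,1;64x(1-16x))`:
for every `n`,
`∑_{k=0}^n binom(2k,k)²·binom(2n-2k,n-k)²
  = ∑_{m=0}^n binom(2m,m)³·(-16)^(n-m)·binom(m,n-m)`,
where `binom(m,n-m) = 0` whenever `n-m > m`. -/
theorem clausen_pullback_coefficients (n : ℕ) :
    (∑ k ∈ Finset.range (n + 1),
        ((2 * k).choose k : ℤ) ^ 2 * ((2 * n - 2 * k).choose (n - k) : ℤ) ^ 2)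
      = ∑ m ∈ Finset.range (n + 1),
        ((2 * m).choose m : ℤ) ^ 3 * (-16 : ℤ) ^ (n - m) * (m.choose (n - m) : ℤ) := by
  have h := aa_eq_bb n
  unfold aa bb at h
  calc (∑ k ∈ Finset.range (n + 1),
        ((2 * k).choose k : ℤ) ^ 2 * ((2 * n - 2 * k).choose (n - k) : ℤ) ^ 2)
      = ∑ k ∈ Finset.range (n+1), AA n k := by
        refine Finset.sum_congr rfl ?_
        intro k hk
        simp only [Finset.mem_range] at hk
        rw [AA_of_le (by omega)]
        unfold cc
        rw [show 2*n-2*k = 2*(n-k) from by omega]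
    _ = ∑ m ∈ Finset.range (n+1), BB n m := h
    _ = _ := by
        refine Finset.sum_congr rfl ?_
        intro m hm
        simp only [Finset.mem_range] at hm
        rw [BB_of_le (by omega)]
        rfl
end

section
/- Define A : ℕ → ℤ by A_n = ∑_{k=0}^n (binom(2k,k))²·(binom(2n−2k,n−k))², and define c : ℕ → ℚ by c_n = n·A_n/32ⁿ. Then c satisfies the first π-kernel recurrence: for every natural number n, (n+1)⁴·c_n − n(2n+3)(2n²+6n+5)·c_{n+1} + 4n(n+1)(n+2)²·c_{n+2} = 0. -/
noncomputable section PiKernelAux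

/-- squared central binomial coefficient, as a rational. -/
private def bq (m : ℕ) : ℚ := ((2 * m).choose m : ℚ) ^ 2

private lemma bq_rec (m : ℕ) :
    ((m : ℚ) + 1) ^ 2 * bq (m + 1) = 4 * (2 * (m : ℚ) + 1) ^ 2 * bq m := by
  have h := Nat.succ_mul_centralBinom_succ m
  have h' : ((m : ℚ) + 1) * ((2 * (m + 1)).choose (m + 1) : ℚ)
      = 2 * (2 * (m : ℚ) + 1) * ((2 * m).choose m : ℚ) := by
    exact_mod_cast congrArg (Nat.cast : ℕ → ℚ) h
  unfold bq
  linear_combination (((m : ℚ) + 1) * ((2 * (m + 1)).choose (m + 1) : ℚ)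
    + 2 * (2 * (m : ℚ) + 1) * ((2 * m).choose m : ℚ)) * h'

private lemma bq_succ (m : ℕ) :
    bq (m + 1) = 4 * (2 * (m : ℚ) + 1) ^ 2 * bq m / ((m : ℚ) + 1) ^ 2 := by
  have hm : ((m : ℚ) + 1) ^ 2 ≠ 0 := by positivity
  rw [eq_div_iff hm]; linear_combination bq_rec m

/-- the Zeilberger certificate polynomial. -/
private def Qq (n k : ℚ) : ℚ :=
  160 - 736 * k + 1024 * k ^ 2 - 384 * k ^ 3
    + n * (848 - 2560 * k + 1856 * k ^ 2 - 256 * k ^ 3)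
    + n ^ 2 * (1536 - 2560 * k + 768 * k ^ 2)
    + n ^ 3 * (1088 - 768 * k) + 256 * n ^ 4

/-- the telescoping term. -/
private def g (n k : ℕ) : ℚ :=
  bq k * bq (n - k) * ((k : ℚ) ^ 2 * Qq n k)
    / ((((n - k : ℕ) : ℚ) + 1) ^ 2 * (((n - k : ℕ) : ℚ) + 2) ^ 2)

private lemma cert (k m : ℕ) :
    (((k + m + 1 : ℕ) : ℚ) + 2) ^ 3 * (bq k * bq (m + 3))
      - 8 * (2 * ((k + m + 1 : ℕ) : ℚ) + 3) * (2 * ((k + m + 1 : ℕ) : ℚ) ^ 2 + 6 * ((k + m + 1 : ℕ) : ℚ) + 5)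
        * (bq k * bq (m + 2))
      + 256 * (((k + m + 1 : ℕ) : ℚ) + 1) ^ 3 * (bq k * bq (m + 1))
      = g (k + m + 1) (k + 1) - g (k + m + 1) k := by
  have h1 : k + m + 1 - (k + 1) = m := by omega
  have h2 : k + m + 1 - k = m + 1 := by omega
  have e3 : bq (m + 3) = 4 * (2 * ((m : ℚ) + 2) + 1) ^ 2 * bq (m + 2) / (((m : ℚ) + 2) + 1) ^ 2 := by
    have := bq_succ (m + 2); push_cast at this ⊢; exact this
  have e2 : bq (m + 2) = 4 * (2 * ((m : ℚ) + 1) + 1) ^ 2 * bq (m + 1) / (((m : ℚ) + 1) + 1) ^ 2 := by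
    have := bq_succ (m + 1); push_cast at this ⊢; exact this
  have e1 : bq (m + 1) = 4 * (2 * (m : ℚ) + 1) ^ 2 * bq m / ((m : ℚ) + 1) ^ 2 := bq_succ m
  have ex : bq (k + 1) = 4 * (2 * (k : ℚ) + 1) ^ 2 * bq k / ((k : ℚ) + 1) ^ 2 := bq_succ k
  simp only [g, h1, h2]
  rw [e3, e2, e1, ex]
  simp only [Qq]
  push_cast
  have hm1 : ((m : ℚ) + 1) ≠ 0 := by positivity
  have hm2 : ((m : ℚ) + 2) ≠ 0 := by positivity
  have hm3 : ((m : ℚ) + 3) ≠ 0 := by positivity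
  have hk1 : ((k : ℚ) + 1) ≠ 0 := by positivity
  field_simp
  ring

private def S (n : ℕ) : ℚ := ∑ k ∈ Finset.range (n + 1), bq k * bq (n - k)

private lemma bq0 : bq 0 = 1 := by norm_num [bq]
private lemma bq1 : bq 1 = 4 := by norm_num [bq]
private lemma bq2 : bq 2 = 36 := by norm_num [bq, Nat.choose]

private lemma g_zero (n : ℕ) : g n 0 = 0 := by simp [g]

private lemma g_diag (n : ℕ) :
    g n n = bq n * ((n : ℚ) ^ 2 * Qq n n) / 4 := by
  simp [g, bq0]
  ring

private lemma bclosure (n : ℕ) :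
    g n n
      + (((n : ℚ) + 2) ^ 3 * (bq n * bq 2)
        - 8 * (2 * (n : ℚ) + 3) * (2 * (n : ℚ) ^ 2 + 6 * (n : ℚ) + 5) * (bq n * bq 1)
        + 256 * ((n : ℚ) + 1) ^ 3 * (bq n * bq 0))
      + ((n : ℚ) + 2) ^ 3 * (bq (n + 1) * bq 1 + bq (n + 2) * bq 0)
      - 8 * (2 * (n : ℚ) + 3) * (2 * (n : ℚ) ^ 2 + 6 * (n : ℚ) + 5) * (bq (n + 1) * bq 0)
      = 0 := by
  have e2 : bq (n + 2) = 4 * (2 * ((n : ℚ) + 1) + 1) ^ 2 * bq (n + 1) / (((n : ℚ) + 1) + 1) ^ 2 := by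
    have := bq_succ (n + 1); push_cast at this ⊢; exact this
  have e1 : bq (n + 1) = 4 * (2 * (n : ℚ) + 1) ^ 2 * bq n / ((n : ℚ) + 1) ^ 2 := bq_succ n
  rw [g_diag, e2, e1, bq0, bq1, bq2]
  simp only [Qq]
  have hn1 : ((n : ℚ) + 1) ≠ 0 := by positivity
  have hn2 : ((n : ℚ) + 2) ≠ 0 := by positivity
  field_simp
  ring

private lemma main_rec (n : ℕ) :
    ((n : ℚ) + 2) ^ 3 * S (n + 2)
      - 8 * (2 * (n : ℚ) + 3) * (2 * (n : ℚ) ^ 2 + 6 * (n : ℚ) + 5) * S (n + 1)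
      + 256 * ((n : ℚ) + 1) ^ 3 * S n = 0 := by
  have hS2 : S (n + 2) = (∑ k ∈ Finset.range (n + 1), bq k * bq (n + 2 - k))
      + (bq (n + 1) * bq 1 + bq (n + 2) * bq 0) := by
    unfold S
    rw [Finset.sum_range_succ, Finset.sum_range_succ]
    simp only [show n + 2 - (n + 1) = 1 from by omega, show n + 2 - (n + 2) = 0 from by omega]
    ring
  have hS1 : S (n + 1) = (∑ k ∈ Finset.range (n + 1), bq k * bq (n + 1 - k))
      + bq (n + 1) * bq 0 := by
    unfold S
    rw [Finset.sum_range_succ]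
    simp only [show n + 1 - (n + 1) = 0 from by omega]
  have hkey : ∑ k ∈ Finset.range (n + 1),
      (((n : ℚ) + 2) ^ 3 * (bq k * bq (n + 2 - k))
        - 8 * (2 * (n : ℚ) + 3) * (2 * (n : ℚ) ^ 2 + 6 * (n : ℚ) + 5) * (bq k * bq (n + 1 - k))
        + 256 * ((n : ℚ) + 1) ^ 3 * (bq k * bq (n - k)))
      = g n n
        + (((n : ℚ) + 2) ^ 3 * (bq n * bq 2)
          - 8 * (2 * (n : ℚ) + 3) * (2 * (n : ℚ) ^ 2 + 6 * (n : ℚ) + 5) * (bq n * bq 1)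
          + 256 * ((n : ℚ) + 1) ^ 3 * (bq n * bq 0)) := by
    rw [Finset.sum_range_succ]
    simp only [show n + 2 - n = 2 from by omega, show n + 1 - n = 1 from by omega,
      show n - n = 0 from by omega]
    congr 1
    have htel : ∑ k ∈ Finset.range n, (g n (k + 1) - g n k) = g n n - g n 0 :=
      Finset.sum_range_sub (g n) n
    rw [g_zero, sub_zero] at htel
    rw [← htel]
    apply Finset.sum_congr rfl
    intro k hk
    have hk' : k < n := Finset.mem_range.mp hk
    obtain ⟨m, rfl⟩ : ∃ m, n = k + m + 1 := ⟨n - k - 1, by omega⟩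
    simp only [show k + m + 1 + 2 - k = m + 3 from by omega,
      show k + m + 1 + 1 - k = m + 2 from by omega,
      show k + m + 1 - k = m + 1 from by omega]
    exact cert k m
  calc ((n : ℚ) + 2) ^ 3 * S (n + 2)
      - 8 * (2 * (n : ℚ) + 3) * (2 * (n : ℚ) ^ 2 + 6 * (n : ℚ) + 5) * S (n + 1)
      + 256 * ((n : ℚ) + 1) ^ 3 * S n
      = (∑ k ∈ Finset.range (n + 1),
          (((n : ℚ) + 2) ^ 3 * (bq k * bq (n + 2 - k))
            - 8 * (2 * (n : ℚ) + 3) * (2 * (n : ℚ) ^ 2 + 6 * (n : ℚ) + 5) * (bq k * bq (n + 1 - k))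
            + 256 * ((n : ℚ) + 1) ^ 3 * (bq k * bq (n - k))))
        + (((n : ℚ) + 2) ^ 3 * (bq (n + 1) * bq 1 + bq (n + 2) * bq 0)
          - 8 * (2 * (n : ℚ) + 3) * (2 * (n : ℚ) ^ 2 + 6 * (n : ℚ) + 5) * (bq (n + 1) * bq 0)) := by
        rw [hS2, hS1]
        unfold S
        rw [Finset.sum_add_distrib]
        simp only [Finset.sum_add_distrib, Finset.sum_sub_distrib, ← Finset.mul_sum]
        ring
    _ = 0 := by rw [hkey]; linear_combination bclosure n

end PiKernelAux

/-- The rescaling `c n = n·A n/32ⁿ` of the sequence A036917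
satisfies the first π-kernel recurrence. -/
theorem A036917_rescaled_is_first_pi_kernel
    (A : ℕ → ℤ)
    (hA : ∀ n : ℕ, A n = ∑ k ∈ Finset.range (n + 1),
      ((2 * k).choose k : ℤ) ^ 2 * ((2 * n - 2 * k).choose (n - k) : ℤ) ^ 2)
    (c : ℕ → ℚ)
    (hc : ∀ n : ℕ, c n = (n : ℚ) * (A n : ℚ) / 32 ^ n) :
    ∀ n : ℕ, ((n : ℚ) + 1) ^ 4 * c n
      - (n : ℚ) * (2 * n + 3) * (2 * (n : ℚ) ^ 2 + 6 * n + 5) * c (n + 1)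
      + 4 * (n : ℚ) * ((n : ℚ) + 1) * ((n : ℚ) + 2) ^ 2 * c (n + 2) = 0 := by
  have hAS : ∀ m : ℕ, ((A m : ℤ) : ℚ) = S m := by
    intro m
    rw [hA m]
    push_cast
    apply Finset.sum_congr rfl
    intro k hk
    have hk' : k < m + 1 := Finset.mem_range.mp hk
    rw [show 2 * m - 2 * k = 2 * (m - k) from by omega]
    simp [bq]
  intro n
  rw [hc n, hc (n + 1), hc (n + 2), hAS n, hAS (n + 1), hAS (n + 2)]
  have h32 : (32 : ℚ) ^ n ≠ 0 := by positivity
  push_cast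
  calc ((n : ℚ) + 1) ^ 4 * ((n : ℚ) * S n / 32 ^ n)
      - (n : ℚ) * (2 * (n : ℚ) + 3) * (2 * (n : ℚ) ^ 2 + 6 * (n : ℚ) + 5)
        * (((n : ℚ) + 1) * S (n + 1) / 32 ^ (n + 1))
      + 4 * (n : ℚ) * ((n : ℚ) + 1) * ((n : ℚ) + 2) ^ 2
        * (((n : ℚ) + 2) * S (n + 2) / 32 ^ (n + 2))
      = (4 * (n : ℚ) * ((n : ℚ) + 1) / (32 ^ n * 1024))
        * (((n : ℚ) + 2) ^ 3 * S (n + 2)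
          - 8 * (2 * (n : ℚ) + 3) * (2 * (n : ℚ) ^ 2 + 6 * (n : ℚ) + 5) * S (n + 1)
          + 256 * ((n : ℚ) + 1) ^ 3 * S n) := by
        rw [pow_succ, pow_succ]
        field_simp
        ring
    _ = 0 := by rw [main_rec n, mul_zero]
end

section
/- Let c : ℕ → ℚ satisfy the second π-kernel recurrence, and define u : ℕ → ℚ by u_n = (−32)ⁿ·c_n/(3n+1). Then for every natural number n ≥ 1: (n+1)³·u_{n+1} = 2(2n+1)(5n² + 5n + 2)·u_n − 64·n³·u_{n−1}. -/
/-- If `c` satisfies the second π-kernel recurrence, then `u n = (-32)ⁿ·c n/(3n+1)`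
satisfies the Domb-number recurrence
`(n+1)³·u(n+1) = 2(2n+1)(5n²+5n+2)·u n - 64·n³·u(n-1)` (OEIS A002895). -/
theorem second_pi_kernel_is_domb (c u : ℕ → ℚ)
    (hc : ∀ n : ℕ, ((n : ℚ) + 1) ^ 3 * (3 * n + 4) * (3 * n + 7) * c n
        + (2 * (n : ℚ) + 3) * (3 * n + 1) * (3 * n + 7)
            * (5 * (n : ℚ) ^ 2 + 15 * n + 12) * c (n + 1)
        + 16 * ((n : ℚ) + 2) ^ 3 * (3 * n + 1) * (3 * n + 4) * c (n + 2) = 0)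
    (hu : ∀ n : ℕ, u n = (-32 : ℚ) ^ n * c n / (3 * (n : ℚ) + 1)) :
    ∀ n : ℕ, 1 ≤ n →
      ((n : ℚ) + 1) ^ 3 * u (n + 1)
        = 2 * (2 * (n : ℚ) + 1) * (5 * (n : ℚ) ^ 2 + 5 * n + 2) * u n
          - 64 * (n : ℚ) ^ 3 * u (n - 1) := by
  rintro n hn
  obtain ⟨m, rfl⟩ : ∃ m, n = m + 1 := ⟨n - 1, (Nat.succ_pred_eq_of_pos hn).symm⟩
  have h1 : (3 * (m : ℚ) + 1) ≠ 0 := by positivity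
  have h4 : (3 * ((m : ℚ) + 1) + 1) ≠ 0 := by positivity
  have h7 : (3 * ((m : ℚ) + 2) + 1) ≠ 0 := by positivity
  have hp : ((-32 : ℚ)) ^ m ≠ 0 := pow_ne_zero _ (by norm_num)
  simp only [Nat.add_sub_cancel]
  rw [hu (m + 1 + 1), hu (m + 1), hu m]
  push_cast
  field_simp
  linear_combination (64 : ℚ) * (-32) ^ m * hc m
end

section
/- Define g : ℕ → ℚ by g_n = ∑_{k=0}^n 1/((2k+1)(2(n−k)+1)), and define c : ℕ → ℚ by c_n = (n+1)!/(2·(2n+1)!!)·g_n, where (2n+1)!! is the odd double factorial. Then c satisfies the Catalan kernel recurrence: for every natural number n, (n+1)(n+2)·c_n − 4(n+2)²·c_{n+1} + (2n+5)²·c_{n+2} = 0. -/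
lemma gauss_square_coeff_eq (n : ℕ) :
    (∑ k ∈ Finset.range (n + 1),
      1 / ((2 * (k : ℚ) + 1) * (2 * ((n : ℚ) - k) + 1)))
      = (1 / ((n : ℚ) + 1)) * ∑ k ∈ Finset.range (n + 1), 1 / (2 * (k : ℚ) + 1) := by
  have h : ∀ k ∈ Finset.range (n + 1),
      1 / ((2 * (k : ℚ) + 1) * (2 * ((n : ℚ) - k) + 1))
        = (1 / (2 * (n : ℚ) + 2)) * (1 / (2 * (k : ℚ) + 1) + 1 / (2 * ((n : ℚ) - k) + 1)) := by
    intro k hk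
    have hk' : (k : ℚ) ≤ n := by
      exact_mod_cast Nat.lt_succ_iff.mp (Finset.mem_range.mp hk)
    have h1 : 2 * (k : ℚ) + 1 ≠ 0 := by positivity
    have h2 : 2 * ((n : ℚ) - k) + 1 ≠ 0 := by nlinarith
    have h3 : 2 * (n : ℚ) + 2 ≠ 0 := by positivity
    field_simp
    ring
  rw [Finset.sum_congr rfl h, ← Finset.mul_sum, Finset.sum_add_distrib]
  have hrefl : ∑ k ∈ Finset.range (n + 1), 1 / (2 * ((n : ℚ) - k) + 1)
      = ∑ k ∈ Finset.range (n + 1), 1 / (2 * (k : ℚ) + 1) := by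
    rw [← Finset.sum_range_reflect (fun k => 1 / (2 * (k : ℚ) + 1)) (n + 1)]
    apply Finset.sum_congr rfl
    intro k hk
    have hk' : k ≤ n := Nat.lt_succ_iff.mp (Finset.mem_range.mp hk)
    have : ((n + 1 - 1 - k : ℕ) : ℚ) = (n : ℚ) - k := by
      simp only [Nat.add_sub_cancel]
      push_cast [Nat.cast_sub hk']
      ring
    rw [this]
  rw [hrefl]
  have h1 : 2 * (n : ℚ) + 2 ≠ 0 := by positivity
  have h2 : (n : ℚ) + 1 ≠ 0 := by positivity
  field_simp
  ring

/-- Let `g n = ∑_{k=0}^n 1/((2k+1)(2(n-k)+1))` (the coefficient sequence of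
`₂F₁(1/2,1;3/2;z)²`) and `c n = (n+1)!/(2·(2n+1)!!)·g n`. Then `c` satisfies the
printed Catalan kernel recurrence. -/
theorem catalan_kernel_from_gauss_square (g c : ℕ → ℚ)
    (hg : ∀ n : ℕ, g n = ∑ k ∈ Finset.range (n + 1),
      1 / ((2 * (k : ℚ) + 1) * (2 * ((n : ℚ) - k) + 1)))
    (hc : ∀ n : ℕ, c n =
      (Nat.factorial (n + 1) : ℚ) / (2 * (Nat.doubleFactorial (2 * n + 1) : ℚ)) * g n) :
    ∀ n : ℕ, ((n : ℚ) + 1) * ((n : ℚ) + 2) * c n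
      - 4 * ((n : ℚ) + 2) ^ 2 * c (n + 1)
      + (2 * (n : ℚ) + 5) ^ 2 * c (n + 2) = 0 := by
  intro n
  set S : ℚ := ∑ k ∈ Finset.range (n + 1), 1 / (2 * (k : ℚ) + 1) with hS
  have hgn : g n = (1 / ((n : ℚ) + 1)) * S := by rw [hg, gauss_square_coeff_eq]
  have hgn1 : g (n + 1) = (1 / ((n : ℚ) + 2)) * (S + 1 / (2 * (n : ℚ) + 3)) := by
    rw [hg, gauss_square_coeff_eq, Finset.sum_range_succ]
    push_cast; ring
  have hgn2 : g (n + 2) = (1 / ((n : ℚ) + 3)) *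
      (S + 1 / (2 * (n : ℚ) + 3) + 1 / (2 * (n : ℚ) + 5)) := by
    rw [hg, gauss_square_coeff_eq, Finset.sum_range_succ, Finset.sum_range_succ]
    push_cast; ring
  set D : ℚ := (Nat.doubleFactorial (2 * n + 1) : ℚ) with hD
  have hD1 : (Nat.doubleFactorial (2 * (n + 1) + 1) : ℚ) = (2 * (n : ℚ) + 3) * D := by
    have : 2 * (n + 1) + 1 = (2 * n + 1) + 2 := by ring
    rw [this, Nat.doubleFactorial_add_two]
    push_cast; ring
  have hD2 : (Nat.doubleFactorial (2 * (n + 2) + 1) : ℚ)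
      = (2 * (n : ℚ) + 5) * ((2 * (n : ℚ) + 3) * D) := by
    have : 2 * (n + 2) + 1 = ((2 * n + 1) + 2) + 2 := by ring
    rw [this, Nat.doubleFactorial_add_two, Nat.doubleFactorial_add_two]
    push_cast; ring
  set F : ℚ := (Nat.factorial (n + 1) : ℚ) with hF
  have hF1 : (Nat.factorial (n + 1 + 1) : ℚ) = ((n : ℚ) + 2) * F := by
    rw [Nat.factorial_succ]; push_cast; ring
  have hF2 : (Nat.factorial (n + 2 + 1) : ℚ) = ((n : ℚ) + 3) * (((n : ℚ) + 2) * F) := by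
    rw [Nat.factorial_succ, Nat.factorial_succ]; push_cast; ring
  have hDne : D ≠ 0 := by
    have := Nat.doubleFactorial_pos (2 * n + 1)
    positivity
  have e0 : (n : ℚ) + 1 ≠ 0 := by positivity
  have e1 : (n : ℚ) + 2 ≠ 0 := by positivity
  have e2 : (n : ℚ) + 3 ≠ 0 := by positivity
  have e3 : 2 * (n : ℚ) + 3 ≠ 0 := by positivity
  have e4 : 2 * (n : ℚ) + 5 ≠ 0 := by positivity
  rw [hc n, hc (n + 1), hc (n + 2), hgn, hgn1, hgn2, hD1, hD2, hF1, hF2]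
  field_simp
  ring
end

section
/- Let a, b, c ∈ ℚ and let f be a formal power series in z over ℚ satisfying the Euler-form Gauss hypergeometric equation (1−z)·θ(θf) = a·b·z·f + ((a+b)·z − c + 1)·θf. Then g = f² satisfies the third-order Euler equation 2·θ(θ + (c−1))(θ + (2c−2))·g − z·Q(θ)·g + 2·z²·(θ + (a+b))(θ + 2a)(θ + 2b)·g = 0, where Q(T) = 4T³ + 6(a+b+c−1)T² + 2(4ab + 4ac + 4bc − 3a − 3b − c + 1)T + 4ab(2c−1), and for a polynomial P, P(θ)·g means the result of applying the corresponding polynomial expression in the operator θ to g (shifts such as θ + λ act by (θ + λ)h = θh + λ·h), with multiplication by z or z² performed after applying the θ-polynomial. -/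
open PowerSeries

/-- The Euler operator `θf = z·f'` on formal power series over `ℚ`. -/
noncomputable def eulerOp (f : PowerSeries ℚ) : PowerSeries ℚ :=
  X * derivative ℚ f

/-- Shifted Euler operator `(θ + λ)h = θh + λ·h`. -/
noncomputable def eulerOpShift (lam : ℚ) (f : PowerSeries ℚ) : PowerSeries ℚ :=
  eulerOp f + C lam * f

lemma eulerOp_add (f g : PowerSeries ℚ) : eulerOp (f + g) = eulerOp f + eulerOp g := by
  simp [eulerOp, mul_add]

lemma eulerOp_sub (f g : PowerSeries ℚ) : eulerOp (f - g) = eulerOp f - eulerOp g := by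
  simp [eulerOp, mul_sub]

lemma eulerOp_mul (f g : PowerSeries ℚ) :
    eulerOp (f * g) = eulerOp f * g + f * eulerOp g := by
  simp only [eulerOp, Derivation.leibniz, smul_eq_mul]
  ring

lemma eulerOp_C (q : ℚ) : eulerOp (C q) = 0 := by
  simp [eulerOp]

lemma eulerOp_X : eulerOp (X : PowerSeries ℚ) = X := by
  simp [eulerOp]

lemma eulerOp_two : eulerOp (2 : PowerSeries ℚ) = 0 := by
  rw [show (2 : PowerSeries ℚ) = C 2 from (map_ofNat _ _).symm, eulerOp_C]

lemma eulerOp_zero : eulerOp (0 : PowerSeries ℚ) = 0 := by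
  simp [eulerOp]

lemma eulerOp_one : eulerOp (1 : PowerSeries ℚ) = 0 := by
  simp [eulerOp]

/-- **Chaundy–Vidūnas equation for the Gauss square.** If `f` satisfies the Euler-form
Gauss hypergeometric equation, then `g = f²` satisfies
`2·θ(θ+(c-1))(θ+(2c-2))·g - z·Q(θ)·g + 2z²·(θ+(a+b))(θ+2a)(θ+2b)·g = 0`, where
`Q(T) = 4T³ + 6(a+b+c-1)T² + 2(4ab+4ac+4bc-3a-3b-c+1)T + 4ab(2c-1)`. -/
theorem gauss_square_third_order_euler_equation (a b c : ℚ) (f g : PowerSeries ℚ)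
    (hf : (1 - X) * eulerOp (eulerOp f)
        = C (a * b) * X * f
          + (C (a + b) * X - C c + 1) * eulerOp f)
    (hg : g = f ^ 2) :
    2 * eulerOp (eulerOpShift (c - 1) (eulerOpShift (2 * c - 2) g))
      - X * (4 * eulerOp (eulerOp (eulerOp g))
          + C (6 * (a + b + c - 1)) * eulerOp (eulerOp g)
          + C (2 * (4 * a * b + 4 * a * c + 4 * b * c - 3 * a - 3 * b - c + 1)) * eulerOp g
          + C (4 * a * b * (2 * c - 1)) * g)
      + 2 * X ^ 2 *
          eulerOpShift (a + b) (eulerOpShift (2 * a) (eulerOpShift (2 * b) g)) = 0 := by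
  subst hg
  have hE2 := congrArg eulerOp hf
  simp only [eulerOp_mul, eulerOp_add, eulerOp_sub, eulerOp_C, eulerOp_X, eulerOp_one,
    eulerOp_zero, eulerOp_two, pow_two, eulerOpShift, map_mul, map_add, map_sub, map_one, map_ofNat] at hf hE2 ⊢
  set u := f with hu
  set t := eulerOp f with ht
  set s := eulerOp t with hs
  set r := eulerOp s with hr
  set A := C a
  set B := C b
  set Cc := C c
  linear_combination
      (12 * t - 12 * X * t - 8 * u + 4 * X * u + 8 * Cc * u - 8 * A * X * u - 8 * B * X * u)
        * hf
    + (4 * u - 4 * X * u) * hE2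
end

section
/- Let α, β, γ₁, γ₂, λ ∈ ℚ satisfy the Fuchs relation α + β + γ₁ + γ₂ = 1. In the field ℚ(z) of rational functions over ℚ, define p = (1−α)/z + (1−β)/(z−1), q = γ₁γ₂/(z(z−1)), and C_λ = λ/(z²(z−1)) + (4γ₁γ₂(γ₁+γ₂) − λ)/(z(z−1)²). Then: (1) 2p² + p′ + 4q = (1−α)(1−2α)/z² + (1−β)(1−2β)/(z−1)² + 4(αβ + γ₁γ₂ + γ₁ + γ₂)/(z(z−1)), where p′ denotes the derivative of p; and (2) the identity 4pq + 2q′ = C_λ holds if and only if λ = 2γ₁γ₂(1−2α). -/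
set_option maxHeartbeats 2000000 in
/-- **Accessory-parameter condition for the Sym²(Gauss) locus.**
In `ℚ(z)` with its standard derivation `d` (determined by `d z = 1`), let
`p = (1-α)/z + (1-β)/(z-1)`, `q = γ₁γ₂/(z(z-1))`, and
`C_λ = λ/(z²(z-1)) + (4γ₁γ₂(γ₁+γ₂)-λ)/(z(z-1)²)`, with Fuchs relation
`α+β+γ₁+γ₂ = 1`. Then
(1) `2p² + p' + 4q = (1-α)(1-2α)/z² + (1-β)(1-2β)/(z-1)² + 4(αβ+γ₁γ₂+γ₁+γ₂)/(z(z-1))`,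
and (2) `4pq + 2q' = C_λ` holds iff `λ = 2γ₁γ₂(1-2α)`. -/
theorem sym2_gauss_accessory_parameter (α β γ₁ γ₂ lam : ℚ)
    (hFuchs : α + β + γ₁ + γ₂ = 1)
    (d : Derivation ℚ (RatFunc ℚ) (RatFunc ℚ)) (hd : d RatFunc.X = 1)
    (z p q Cl : RatFunc ℚ)
    (hz : z = RatFunc.X)
    (hp : p = RatFunc.C (1 - α) / z + RatFunc.C (1 - β) / (z - 1))
    (hq : q = RatFunc.C (γ₁ * γ₂) / (z * (z - 1)))
    (hCl : Cl = RatFunc.C lam / (z ^ 2 * (z - 1))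
        + RatFunc.C (4 * γ₁ * γ₂ * (γ₁ + γ₂) - lam) / (z * (z - 1) ^ 2)) :
    (2 * p ^ 2 + d p + 4 * q
      = RatFunc.C ((1 - α) * (1 - 2 * α)) / z ^ 2
        + RatFunc.C ((1 - β) * (1 - 2 * β)) / (z - 1) ^ 2
        + RatFunc.C (4 * (α * β + γ₁ * γ₂ + γ₁ + γ₂)) / (z * (z - 1))) ∧
    ((4 * p * q + 2 * d q = Cl) ↔ lam = 2 * γ₁ * γ₂ * (1 - 2 * α)) := by
  have hβ : β = 1 - α - γ₁ - γ₂ := by linarith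
  subst hβ hz hp hq hCl
  set X : RatFunc ℚ := RatFunc.X with hX
  have hz0 : X ≠ 0 := RatFunc.X_ne_zero
  have hz1 : X - 1 ≠ 0 := by
    intro h
    have hx1 : X = 1 := by have := sub_eq_zero.mp h; simpa using this
    have : (1 : RatFunc ℚ) = 0 := by rw [← hd, hx1]; exact d.map_one_eq_zero
    exact one_ne_zero this
  have hdC : ∀ a : ℚ, d (RatFunc.C a) = 0 := fun a => by
    have h := d.map_algebraMap a
    rwa [eq_ratCast (@algebraMap ℚ (RatFunc ℚ) _ _ DivisionRing.toRatAlgebra) a, ← eq_ratCast RatFunc.C a] at h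
  have hdz1 : d (X - 1) = 1 := by
    rw [map_sub, hd, d.map_one_eq_zero, sub_zero]
  have hdp : d (RatFunc.C (1 - α) / X + RatFunc.C (1 - (1 - α - γ₁ - γ₂)) / (X - 1))
      = -(RatFunc.C (1 - α) / X ^ 2) - RatFunc.C (1 - (1 - α - γ₁ - γ₂)) / (X - 1) ^ 2 := by
    rw [map_add, Derivation.leibniz_div, Derivation.leibniz_div, hdC, hdC, hd, hdz1]
    simp only [smul_eq_mul]
    field_simp
    ring
  have hdq : d (RatFunc.C (γ₁ * γ₂) / (X * (X - 1)))
      = -(RatFunc.C (γ₁ * γ₂) * (2 * X - 1) / (X ^ 2 * (X - 1) ^ 2)) := by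
    rw [Derivation.leibniz_div, hdC, d.leibniz, hd, hdz1]
    simp only [smul_eq_mul]
    field_simp
    ring
  constructor
  · rw [hdp]
    simp only [map_sub, map_add, map_mul, map_one, map_ofNat]
    field_simp [hz0, hz1]
    ring
  · have key : 4 * (RatFunc.C (1 - α) / X + RatFunc.C (1 - (1 - α - γ₁ - γ₂)) / (X - 1))
          * (RatFunc.C (γ₁ * γ₂) / (X * (X - 1)))
        + 2 * d (RatFunc.C (γ₁ * γ₂) / (X * (X - 1)))
        - (RatFunc.C lam / (X ^ 2 * (X - 1))
          + RatFunc.C (4 * γ₁ * γ₂ * (γ₁ + γ₂) - lam) / (X * (X - 1) ^ 2))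
        = RatFunc.C (lam - 2 * γ₁ * γ₂ * (1 - 2 * α)) / (X ^ 2 * (X - 1) ^ 2) := by
      rw [hdq]
      simp only [map_sub, map_add, map_mul, map_one, map_ofNat]
      rw [eq_div_iff (mul_ne_zero (pow_ne_zero 2 hz0) (pow_ne_zero 2 hz1))]
      field_simp [hz0, hz1]
      ring
    constructor
    · intro h
      rw [h] at key
      simp only [sub_self] at key
      rw [eq_comm, div_eq_zero_iff] at key
      have h0 : RatFunc.C (lam - 2 * γ₁ * γ₂ * (1 - 2 * α)) = 0 := by
        rcases key with h0 | hden
        · exact h0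
        · exact absurd hden (by simp [pow_eq_zero_iff, hz0, hz1, sub_eq_zero])
      have : lam - 2 * γ₁ * γ₂ * (1 - 2 * α) = 0 := by
        exact (RatFunc.C (K := ℚ)).injective (by simpa using h0)
      linarith
    · intro h
      have h0 : RatFunc.C (lam - 2 * γ₁ * γ₂ * (1 - 2 * α)) = 0 := by
        rw [h]; simp
      rw [h0] at key
      simp only [zero_div] at key
      exact sub_eq_zero.mp key
end

section
/- Let f be a formal power series in z over ℚ satisfying z(1−z)·f″ + (1 − (3/2)z)·f′ − (1/18)·f = 0 (the Gauss hypergeometric equation with parameters a = 1/6, b = 1/3, c = 1). Let φ be the formal power series in x over ℚ with zero constant term determined by (1−4x)³·φ = 108x², let F = f∘φ be the substitution of φ into f, let s = ∑_{m≥0} binom(2m,m)·x^m (so that (1−4x)·s² = 1), and let y = s·F. Then x(1−4x)(1−16x)·y″ + (1 − 30x + 128x²)·y′ − 2(1−8x)·y = 0. -/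
open PowerSeries

open Finset in
private lemma coeff_pow_eq_zero' {φ : PowerSeries ℚ} (h0 : constantCoeff φ = 0)
    {n m : ℕ} (h : n < m) : coeff n (φ ^ m) = 0 := by
  have hdvd : (X : PowerSeries ℚ) ^ m ∣ φ ^ m :=
    pow_dvd_pow_of_dvd (PowerSeries.X_dvd_iff.mpr h0) m
  exact PowerSeries.X_pow_dvd_iff.mp hdvd n h

/-- Composition (substitution) of power series, defined coefficientwise. -/
noncomputable def pscomp (φ g : PowerSeries ℚ) : PowerSeries ℚ :=
  PowerSeries.mk fun n => ∑ m ∈ Finset.range (n + 1), coeff m g * coeff n (φ ^ m)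

lemma coeff_cmp (φ g : PowerSeries ℚ) (n : ℕ) :
    coeff n (pscomp φ g) = ∑ m ∈ Finset.range (n + 1), coeff m g * coeff n (φ ^ m) :=
  coeff_mk _ _

open Finset in
private lemma cmp_mul_coeff {φ : PowerSeries ℚ} (h0 : constantCoeff φ = 0)
    (g w : PowerSeries ℚ) (n : ℕ) :
    coeff n (pscomp φ g * w) = ∑ m ∈ range (n + 1), coeff m g * coeff n (φ ^ m * w) := by
  rw [coeff_mul]
  have step1 : ∀ p ∈ antidiagonal n,
      coeff p.1 (pscomp φ g) * coeff p.2 w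
        = ∑ m ∈ range (n + 1), coeff m g * coeff p.1 (φ ^ m) * coeff p.2 w := by
    intro p hp
    rw [coeff_cmp]
    rw [Finset.sum_subset (range_subset_range.mpr (Nat.succ_le_succ (Finset.HasAntidiagonal.antidiagonal.fst_le hp)))]
    · rw [Finset.sum_mul]
    · intro m hm hnm
      have hlt : p.1 < m := by
        simp only [mem_range] at hm hnm; omega
      rw [coeff_pow_eq_zero' h0 hlt, mul_zero]
  rw [Finset.sum_congr rfl step1, Finset.sum_comm]
  refine Finset.sum_congr rfl fun m _ => ?_
  rw [coeff_mul, Finset.mul_sum]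
  exact Finset.sum_congr rfl fun p _ => mul_assoc _ _ _

private lemma cmp_zero (φ : PowerSeries ℚ) : pscomp φ 0 = 0 := by
  ext n
  simp [coeff_cmp]

private lemma cmp_add (φ g h : PowerSeries ℚ) : pscomp φ (g + h) = pscomp φ g + pscomp φ h := by
  ext n
  simp [coeff_cmp, add_mul, Finset.sum_add_distrib]

private lemma cmp_sub (φ g h : PowerSeries ℚ) : pscomp φ (g - h) = pscomp φ g - pscomp φ h := by
  ext n
  simp [coeff_cmp, sub_mul, Finset.sum_sub_distrib]

private lemma cmp_C_mul (φ g : PowerSeries ℚ) (c : ℚ) :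
    pscomp φ (C c * g) = C c * pscomp φ g := by
  ext n
  simp [coeff_cmp, coeff_C_mul, Finset.mul_sum, mul_assoc]

open Finset in
private lemma cmp_X_mul {φ : PowerSeries ℚ} (h0 : constantCoeff φ = 0)
    (g : PowerSeries ℚ) : pscomp φ (X * g) = φ * pscomp φ g := by
  ext n
  rw [mul_comm φ (pscomp φ g), cmp_mul_coeff h0, coeff_cmp, Finset.sum_range_succ',
    Finset.sum_range_succ]
  have h1 : coeff 0 (X * g) = 0 := by
    simp [coeff_zero_eq_constantCoeff]
  have h2 : coeff n (φ ^ n * φ) = 0 := by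
    rw [← pow_succ]; exact coeff_pow_eq_zero' h0 (Nat.lt_succ_self n)
  rw [h1, h2, zero_mul, mul_zero, add_zero, add_zero]
  refine Finset.sum_congr rfl fun i _ => ?_
  rw [coeff_succ_X_mul, pow_succ]

open Finset in
private lemma cmp_derivative {φ : PowerSeries ℚ} (h0 : constantCoeff φ = 0)
    (g : PowerSeries ℚ) :
    derivative ℚ (pscomp φ g) = pscomp φ (derivative ℚ g) * derivative ℚ φ := by
  ext n
  rw [coeff_derivative, cmp_mul_coeff h0, coeff_cmp, Finset.sum_range_succ']
  have h0' : coeff (n + 1) ((φ : PowerSeries ℚ) ^ 0) = 0 := by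
    simp [coeff_one]
  rw [h0', mul_zero, add_zero, Finset.sum_mul]
  refine Finset.sum_congr rfl fun i _ => ?_
  rw [coeff_derivative]
  have hlp := coeff_derivative (φ ^ (i + 1)) n
  rw [Derivation.leibniz_pow, Nat.add_sub_cancel, smul_eq_mul, map_nsmul, nsmul_eq_mul] at hlp
  push_cast at hlp ⊢
  linear_combination (-(coeff (i + 1) g)) * hlp

private lemma d_mul (a b : PowerSeries ℚ) :
    derivative ℚ (a * b) = derivative ℚ a * b + a * derivative ℚ b := by
  rw [Derivation.leibniz, smul_eq_mul, smul_eq_mul]; ring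

private lemma d_add (a b : PowerSeries ℚ) :
    derivative ℚ (a + b) = derivative ℚ a + derivative ℚ b := by
  ext n; simp [coeff_derivative, add_mul]

private lemma d_sub (a b : PowerSeries ℚ) :
    derivative ℚ (a - b) = derivative ℚ a - derivative ℚ b := by
  ext n; simp [coeff_derivative, sub_mul]

private lemma d_one : derivative ℚ (1 : PowerSeries ℚ) = 0 :=
  Derivation.map_one_eq_zero _

private lemma d_num (n : ℕ) [n.AtLeastTwo] :
    derivative ℚ (OfNat.ofNat n : PowerSeries ℚ) = 0 := by
  rw [← Nat.cast_ofNat]; exact Derivation.map_natCast _ n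

private lemma d_sq (a : PowerSeries ℚ) :
    derivative ℚ (a ^ 2) = 2 * a * derivative ℚ a := by
  rw [pow_two, d_mul]; ring

private lemma d_cube (a : PowerSeries ℚ) :
    derivative ℚ (a ^ 3) = 3 * a ^ 2 * derivative ℚ a := by
  rw [show a ^ 3 = a ^ 2 * a from by ring, d_mul, d_sq]; ring

private lemma d_p4 (a : PowerSeries ℚ) :
    derivative ℚ (a ^ 4) = 4 * a ^ 3 * derivative ℚ a := by
  rw [show a ^ 4 = a ^ 3 * a from by ring, d_mul, d_cube]; ring

/-- **Domb closure via Belyi pullback: the Heun equation.**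
Let `f` satisfy the Gauss equation `z(1-z)f'' + (1-(3/2)z)f' - (1/18)f = 0`
(parameters `(1/6, 1/3, 1)`), let `φ` be the power series with zero constant term
determined by `(1-4x)³·φ = 108x²`, let `F = f∘φ` (substitution, given coefficientwise
by `coeff n F = ∑_{m≤n} coeff m f · coeff n (φ^m)`), let
`s = ∑ binom(2m,m)·x^m` (so that `(1-4x)·s² = 1`), and let `y = s·F`. Then
`x(1-4x)(1-16x)·y'' + (1-30x+128x²)·y' - 2(1-8x)·y = 0`. -/
theorem domb_heun_equation (f φ F s y : PowerSeries ℚ)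
    (hf : X * (1 - X) * derivative ℚ (derivative ℚ f)
        + (1 - C (3 / 2) * X) * derivative ℚ f - C (1 / 18) * f = 0)
    (hφ0 : constantCoeff φ = 0)
    (hφ : (1 - 4 * X) ^ 3 * φ = 108 * X ^ 2)
    (hF : ∀ n : ℕ, coeff n F
        = ∑ m ∈ Finset.range (n + 1), coeff m f * coeff n (φ ^ m))
    (hs : s = PowerSeries.mk fun m => ((2 * m).choose m : ℚ))
    (hs4 : (1 - 4 * X) * s ^ 2 = 1)
    (hy : y = s * F) :
    X * (1 - 4 * X) * (1 - 16 * X) * derivative ℚ (derivative ℚ y)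
      + (1 - 30 * X + 128 * X ^ 2) * derivative ℚ y
      - 2 * (1 - 8 * X) * y = 0 := by
  -- basic nonvanishing facts
  have hs0 : s ≠ 0 := by
    intro h
    have h1 : constantCoeff s = 1 := by rw [hs]; simp [constantCoeff_mk]
    rw [h] at h1
    simp at h1
  have h2ne : (2 : PowerSeries ℚ) ≠ 0 := by
    intro h
    have h' := congrArg constantCoeff h
    rw [map_ofNat, map_zero] at h'
    norm_num at h'
  have hu : (1 - 4 * X : PowerSeries ℚ) ≠ 0 := by
    intro h
    have := congrArg constantCoeff h
    simp at this
  have hd14 : derivative ℚ (1 - 4 * X : PowerSeries ℚ) = -4 := by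
    rw [d_sub, d_one, d_mul, d_num, derivative_X]; ring
  -- the relation (1-4X)·s' = 2·s
  have raw1 : derivative ℚ (1 - 4 * X) * s ^ 2 + (1 - 4 * X) * derivative ℚ (s ^ 2) = 0 := by
    rw [← d_mul, hs4, d_one]
  rw [hd14, d_sq] at raw1
  have e1core : (2 * s) * ((1 - 4 * X) * derivative ℚ s - 2 * s) = 0 := by
    linear_combination raw1
  have e1 : (1 - 4 * X) * derivative ℚ s = 2 * s := by
    have h2s : (2 * s : PowerSeries ℚ) ≠ 0 := mul_ne_zero h2ne hs0
    exact sub_eq_zero.mp ((mul_eq_zero.mp e1core).resolve_left h2s)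
  -- the relation (1-4X)·s'' = 6·s'
  have raw9 := congrArg (derivative ℚ) e1
  rw [d_mul, hd14, d_mul, d_num] at raw9
  have e9 : (1 - 4 * X) * derivative ℚ (derivative ℚ s) = 6 * derivative ℚ s := by
    linear_combination raw9
  -- the relation (1-4X)⁴·φ' = 216X + 432X²
  have raw3 := congrArg (derivative ℚ) hφ
  rw [d_mul, d_cube, hd14, d_mul, d_num, d_sq, derivative_X] at raw3
  have e3 : (1 - 4 * X) ^ 4 * derivative ℚ φ = 216 * X + 432 * X ^ 2 := by
    linear_combination (1 - 4 * X) * raw3 + 12 * hφ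
  -- the relation (1-4X)⁵·φ'' = 216 + 3456X + 3456X²
  have raw4 := congrArg (derivative ℚ) e3
  rw [d_mul, d_p4, hd14, d_add, d_mul, d_mul, d_num, d_num, d_sq, derivative_X] at raw4
  have e4 : (1 - 4 * X) ^ 5 * derivative ℚ (derivative ℚ φ)
      = 216 + 3456 * X + 3456 * X ^ 2 := by
    linear_combination (1 - 4 * X) * raw4 + 16 * e3
  -- composition
  have hFc : F = pscomp φ f := by
    ext n
    rw [hF n, coeff_cmp]
  obtain ⟨A, hA⟩ : ∃ A, pscomp φ (derivative ℚ f) = A := ⟨_, rfl⟩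
  obtain ⟨B, hB⟩ : ∃ B, pscomp φ (derivative ℚ (derivative ℚ f)) = B := ⟨_, rfl⟩
  have e6 : derivative ℚ F = A * derivative ℚ φ := by
    rw [hFc, cmp_derivative hφ0, hA]
  have e7a : derivative ℚ A = B * derivative ℚ φ := by
    rw [← hA, cmp_derivative hφ0, hB]
  have e7 : derivative ℚ (derivative ℚ F)
      = B * (derivative ℚ φ) ^ 2 + A * derivative ℚ (derivative ℚ φ) := by
    rw [e6, d_mul, e7a]; ring
  -- pull back the hypergeometric equation through φ
  have hf' : (X * derivative ℚ (derivative ℚ f) - X * (X * derivative ℚ (derivative ℚ f)))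
      + (derivative ℚ f - C (3 / 2) * (X * derivative ℚ f)) - C (1 / 18) * f = 0 := by
    linear_combination hf
  have e5C := congrArg (pscomp φ) hf'
  rw [cmp_zero] at e5C
  simp only [cmp_sub, cmp_add, cmp_C_mul, cmp_X_mul hφ0] at e5C
  rw [hA, hB, ← hFc] at e5C
  have h32 : (2 : PowerSeries ℚ) * C (3 / 2) = 3 := by
    rw [← map_ofNat C 2, ← map_mul, show (2 : ℚ) * (3 / 2) = 3 by norm_num, map_ofNat]
  have h18 : (18 : PowerSeries ℚ) * C (1 / 18) = 1 := by
    rw [← map_ofNat C 18, ← map_mul, show (18 : ℚ) * (1 / 18) = 1 by norm_num, map_one]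
  have e5 : 36 * (φ * B) - 36 * (φ * (φ * B)) + 36 * A - 54 * (φ * A) - 2 * F = 0 := by
    linear_combination 36 * e5C + 18 * (φ * A) * h32 + 2 * F * h18
  -- derivatives of y
  have edy : derivative ℚ y = derivative ℚ s * F + s * derivative ℚ F := by
    rw [hy]; exact d_mul s F
  have eddy : derivative ℚ (derivative ℚ y)
      = derivative ℚ (derivative ℚ s) * F + 2 * (derivative ℚ s * derivative ℚ F)
        + s * derivative ℚ (derivative ℚ F) := by
    rw [edy, d_add, d_mul, d_mul]; ring
  -- the Heun equation, multiplied by (1-4X)^21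
  have key : (1 - 4 * X : PowerSeries ℚ) ^ 21
      * (X * (1 - 4 * X) * (1 - 16 * X) * derivative ℚ (derivative ℚ y)
        + (1 - 30 * X + 128 * X ^ 2) * derivative ℚ y
        - 2 * (1 - 8 * X) * y) = 0 := by
    linear_combination
      ((1 - 4 * X) ^ 19 * ((1 : PowerSeries ℚ) * F + (2 : PowerSeries ℚ) * X * A * (derivative ℚ φ) + (-28 : PowerSeries ℚ) * X * F + (-48 : PowerSeries ℚ) * X ^ 2 * A * (derivative ℚ φ) + (128 : PowerSeries ℚ) * X ^ 2 * F + (288 : PowerSeries ℚ) * X ^ 3 * A * (derivative ℚ φ) + (-128 : PowerSeries ℚ) * X ^ 3 * F + (-512 : PowerSeries ℚ) * X ^ 4 * A * (derivative ℚ φ))) * e1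
      + ((1 - 4 * X) ^ 20 * ((1 : PowerSeries ℚ) * X * F + (-20 : PowerSeries ℚ) * X ^ 2 * F + (64 : PowerSeries ℚ) * X ^ 3 * F)) * e9
      + ((-432 : PowerSeries ℚ) * X * s * B + (432 : PowerSeries ℚ) * X * s * B * φ + (648 : PowerSeries ℚ) * X * s * A + (29376 : PowerSeries ℚ) * X ^ 2 * s * B + (-29376 : PowerSeries ℚ) * X ^ 2 * s * B * φ + (-44064 : PowerSeries ℚ) * X ^ 2 * s * A + (-893376 : PowerSeries ℚ) * X ^ 3 * s * B + (940032 : PowerSeries ℚ) * X ^ 3 * s * B * φ + (1410048 : PowerSeries ℚ) * X ^ 3 * s * A + (16187904 : PowerSeries ℚ) * X ^ 4 * s * B + (-18800640 : PowerSeries ℚ) * X ^ 4 * s * B * φ + (-28200960 : PowerSeries ℚ) * X ^ 4 * s * A + (-195277824 : PowerSeries ℚ) * X ^ 5 * s * B + (263208960 : PowerSeries ℚ) * X ^ 5 * s * B * φ + (394813440 : PowerSeries ℚ) * X ^ 5 * s * A + (1650475008 : PowerSeries ℚ) * X ^ 6 * s * B + (-2737373184 : PowerSeries ℚ) * X ^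 6 * s * B * φ + (-4106059776 : PowerSeries ℚ) * X ^ 6 * s * A + (-9943105536 : PowerSeries ℚ) * X ^ 7 * s * B + (21898985472 : PowerSeries ℚ) * X ^ 7 * s * B * φ + (32848478208 : PowerSeries ℚ) * X ^ 7 * s * A + (42003726336 : PowerSeries ℚ) * X ^ 8 * s * B + (-137650765824 : PowerSeries ℚ) * X ^ 8 * s * B * φ + (-206476148736 : PowerSeries ℚ) * X ^ 8 * s * A + (-114371592192 : PowerSeries ℚ) * X ^ 9 * s * B + (688253829120 : PowerSeries ℚ) * X ^ 9 * s * B * φ + (1032380743680 : PowerSeries ℚ) * X ^ 9 * s * A + (129553661952 : PowerSeries ℚ) * X ^ 10 * s * B + (-2753015316480 : PowerSeries ℚ) * X ^ 10 * s * B * φ + (-4129522974720 : PowerSeries ℚ) * X ^ 10 * s * A + (372466778112 : PowerSeries ℚ) * X ^ 11 * s * B + (8809649012736 : PowerSeries ℚ) * X ^ 11 * s * B * φ + (13214473519104 : PowerSeries ℚ) * X ^ 11 * s * A + (-2061080985600 : PowerSeries ℚ) * X ^ 12 * s * B + (-22424561123328 : PowerSeries ℚ) * X ^ 12 * s * B *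 φ + (-33636841684992 : PowerSeries ℚ) * X ^ 12 * s * A + (4122161971200 : PowerSeries ℚ) * X ^ 13 * s * B + (44849122246656 : PowerSeries ℚ) * X ^ 13 * s * B * φ + (67273683369984 : PowerSeries ℚ) * X ^ 13 * s * A + (-2232309252096 : PowerSeries ℚ) * X ^ 14 * s * B + (-68998649610240 : PowerSeries ℚ) * X ^ 14 * s * B * φ + (-103497974415360 : PowerSeries ℚ) * X ^ 14 * s * A + (-7624640692224 : PowerSeries ℚ) * X ^ 15 * s * B + (78855599554560 : PowerSeries ℚ) * X ^ 15 * s * B * φ + (118283399331840 : PowerSeries ℚ) * X ^ 15 * s * A + (19250043420672 : PowerSeries ℚ) * X ^ 16 * s * B + (-63084479643648 : PowerSeries ℚ) * X ^ 16 * s * B * φ + (-94626719465472 : PowerSeries ℚ) * X ^ 16 * s * A + (-19018115186688 : PowerSeries ℚ) * X ^ 17 * s * B + (31542239821824 : PowerSeries ℚ) * X ^ 17 * s * B * φ + (47313359732736 : PowerSeries ℚ) * X ^ 17 * s * A + (7421703487488 : PowerSeries ℚ) * X ^ 18 * s * B + (-7421703487488 : PowerSeries ℚ) * X ^ 18 *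 s * B * φ + (-11132555231232 : PowerSeries ℚ) * X ^ 18 * s * A) * hφ
      + ((1 - 4 * X) ^ 6 * ((1 : PowerSeries ℚ) * s * A + (1 : PowerSeries ℚ) * X * s * B * (derivative ℚ φ) + (-70 : PowerSeries ℚ) * X * s * A + (216 : PowerSeries ℚ) * X ^ 2 * s * B + (-64 : PowerSeries ℚ) * X ^ 2 * s * B * (derivative ℚ φ) + (2088 : PowerSeries ℚ) * X ^ 2 * s * A + (-9936 : PowerSeries ℚ) * X ^ 3 * s * B + (1824 : PowerSeries ℚ) * X ^ 3 * s * B * (derivative ℚ φ) + (-36256 : PowerSeries ℚ) * X ^ 3 * s * A + (186624 : PowerSeries ℚ) * X ^ 4 * s * B + (-30976 : PowerSeries ℚ) * X ^ 4 * s * B * (derivative ℚ φ) + (415360 : PowerSeries ℚ) * X ^ 4 * s * A + (-1907712 : PowerSeries ℚ) * X ^ 5 * s * B + (352000 : PowerSeries ℚ) * X ^ 5 * s * B * (derivative ℚ φ) + (-3345408 : PowerSeries ℚ) * X ^ 5 * s * A + (11612160 : PowerSeries ℚ) * X ^ 6 * s * B + (-2838528 : PowerSeries ℚ) * X ^ 6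 * s * B * (derivative ℚ φ) + (19599360 : PowerSeries ℚ) * X ^ 6 * s * A + (-41803776 : PowerSeries ℚ) * X ^ 7 * s * B + (16760832 : PowerSeries ℚ) * X ^ 7 * s * B * (derivative ℚ φ) + (-84885504 : PowerSeries ℚ) * X ^ 7 * s * A + (74317824 : PowerSeries ℚ) * X ^ 8 * s * B + (-73531392 : PowerSeries ℚ) * X ^ 8 * s * B * (derivative ℚ φ) + (272498688 : PowerSeries ℚ) * X ^ 8 * s * A + (21233664 : PowerSeries ℚ) * X ^ 9 * s * B + (240058368 : PowerSeries ℚ) * X ^ 9 * s * B * (derivative ℚ φ) + (-641597440 : PowerSeries ℚ) * X ^ 9 * s * A + (-382205952 : PowerSeries ℚ) * X ^ 10 * s * B + (-576716800 : PowerSeries ℚ) * X ^ 10 * s * B * (derivative ℚ φ) + (1078460416 : PowerSeries ℚ) * X ^ 10 * s * A + (707788800 : PowerSeries ℚ) * X ^ 11 * s * B + (991952896 : PowerSeries ℚ) * X ^ 11 * s * B * (derivative ℚ φ) + (-1226833920 : PowerSeries ℚ) * X ^ 11 * s * A + (-452984832 : PowerSeries ℚ) * X ^ 12 * s * B + (-1157627904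 : PowerSeries ℚ) * X ^ 12 * s * B * (derivative ℚ φ) + (847249408 : PowerSeries ℚ) * X ^ 12 * s * A + (822083584 : PowerSeries ℚ) * X ^ 13 * s * B * (derivative ℚ φ) + (-268435456 : PowerSeries ℚ) * X ^ 13 * s * A + (-268435456 : PowerSeries ℚ) * X ^ 14 * s * B * (derivative ℚ φ))) * e3
      + ((1 - 4 * X) ^ 14 * ((1 : PowerSeries ℚ) * X * s * A + (-28 : PowerSeries ℚ) * X ^ 2 * s * A + (240 : PowerSeries ℚ) * X ^ 3 * s * A + (-832 : PowerSeries ℚ) * X ^ 4 * s * A + (1024 : PowerSeries ℚ) * X ^ 5 * s * A)) * e4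
      + ((1 - 4 * X) ^ 6 * ((12 : PowerSeries ℚ) * X * s + (-672 : PowerSeries ℚ) * X ^ 2 * s + (17472 : PowerSeries ℚ) * X ^ 3 * s + (-279552 : PowerSeries ℚ) * X ^ 4 * s + (3075072 : PowerSeries ℚ) * X ^ 5 * s + (-24600576 : PowerSeries ℚ) * X ^ 6 * s + (147603456 : PowerSeries ℚ) * X ^ 7 * s + (-674758656 : PowerSeries ℚ) * X ^ 8 * s + (2361655296 : PowerSeries ℚ) * X ^ 9 * s + (-6297747456 : PowerSeries ℚ) * X ^ 10 * s + (12595494912 : PowerSeries ℚ) * X ^ 11 * s + (-18320719872 : PowerSeries ℚ) * X ^ 12 * s + (18320719872 : PowerSeries ℚ) * X ^ 13 * s + (-11274289152 : PowerSeries ℚ) * X ^ 14 * s + (3221225472 : PowerSeries ℚ) * X ^ 15 * s)) * e5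
      + ((1 - 4 * X) ^ 21 * ((1 : PowerSeries ℚ) * s + (2 : PowerSeries ℚ) * X * (derivative ℚ s) + (-30 : PowerSeries ℚ) * X * s + (-40 : PowerSeries ℚ) * X ^ 2 * (derivative ℚ s) + (128 : PowerSeries ℚ) * X ^ 2 * s + (128 : PowerSeries ℚ) * X ^ 3 * (derivative ℚ s))) * e6
      + ((1 - 4 * X) ^ 21 * ((1 : PowerSeries ℚ) * X * s + (-20 : PowerSeries ℚ) * X ^ 2 * s + (64 : PowerSeries ℚ) * X ^ 3 * s)) * e7
      + ((1 - 4 * X) ^ 21 * ((-2 : PowerSeries ℚ) + (16 : PowerSeries ℚ) * X)) * hy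
      + ((1 - 4 * X) ^ 21 * ((1 : PowerSeries ℚ) + (-30 : PowerSeries ℚ) * X + (128 : PowerSeries ℚ) * X ^ 2)) * edy
      + ((1 - 4 * X) ^ 21 * ((1 : PowerSeries ℚ) * X + (-20 : PowerSeries ℚ) * X ^ 2 + (64 : PowerSeries ℚ) * X ^ 3)) * eddy
  rcases mul_eq_zero.mp key with h | h
  · exact absurd h (pow_ne_zero _ hu)
  · exact h
end

section
/- Let p be a prime with p ≠ 3, let r ∈ {1, 2}, and let N be a natural number. Then the p-adic valuation of N! is at most the p-adic valuation of the product ∏_{j=1}^N (3j − r); equivalently, the p-part of N! divides ∏_{j=1}^N (3j − r). -/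
/-- Existence of a solution `j0 ∈ [1, q]` of `3 * j0 ≡ r (mod q)` when `3` is coprime to `q`. -/
lemma exists_base_solution (q r : ℕ) (hq : 0 < q) (hcop : Nat.Coprime 3 q) (hr : r = 1 ∨ r = 2) :
    ∃ j0, 1 ≤ j0 ∧ j0 ≤ q ∧ q ∣ 3 * j0 - r := by
  haveI : NeZero q := ⟨hq.ne'⟩
  have hu : IsUnit (3 : ZMod q) := (ZMod.isUnit_iff_coprime 3 q).mpr hcop
  set u : ZMod q := (3 : ZMod q)⁻¹ * (r : ZMod q) with hu_def
  have h3u : (3 : ZMod q) * u = (r : ZMod q) := by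
    rw [hu_def, ← mul_assoc, ZMod.mul_inv_of_unit _ hu, one_mul]
  set x : ℕ := u.val with hx_def
  have hxq : x < q := ZMod.val_lt u
  have hxu : (x : ZMod q) = u := ZMod.natCast_rightInverse u
  refine ⟨if x = 0 then q else x, ?_, ?_, ?_⟩
  · split <;> omega
  · split <;> omega
  · set j0 := if x = 0 then q else x with hj0
    have hj0cast : ((j0 : ℕ) : ZMod q) = u := by
      rw [hj0]
      split
      · next h =>
        have hu0 : u = 0 := by rw [← hxu, h]; simp
        rw [ZMod.natCast_self, hu0]
      · exact hxu
    have hj01 : 1 ≤ j0 := by rw [hj0]; split <;> omega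
    have hge : r ≤ 3 * j0 := by omega
    have : ((3 * j0 - r : ℕ) : ZMod q) = 0 := by
      push_cast [Nat.cast_sub hge]
      rw [hj0cast, h3u, sub_self]
    exact (ZMod.natCast_eq_zero_iff _ _).mp this

/-- For each `ℓ`, there are at least `⌊N / p^ℓ⌋` indices `j ∈ [1, N]` with `p^ℓ ∣ 3j - r`. -/
lemma count_ge (p N r ℓ : ℕ) (hp : p.Prime) (hp3 : p ≠ 3) (hr : r = 1 ∨ r = 2) :
    N / p ^ ℓ ≤ ((Finset.Icc 1 N).filter (fun j => p ^ ℓ ∣ 3 * j - r)).card := by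
  set q := p ^ ℓ with hq_def
  have hq : 0 < q := pow_pos hp.pos ℓ
  have hcop : Nat.Coprime 3 q :=
    Nat.Coprime.pow_right ℓ (by
      rw [Nat.coprime_primes Nat.prime_three hp]
      exact fun h => hp3 h.symm)
  obtain ⟨j0, hj01, hj0q, hj0dvd⟩ := exists_base_solution q r hq hcop hr
  have := Finset.card_le_card_of_injOn (f := fun k => j0 + (k - 1) * q)
    (s := Finset.Icc 1 (N / q))
    (t := (Finset.Icc 1 N).filter (fun j => q ∣ 3 * j - r))
    (fun k hk => by
      simp only [Finset.mem_coe, Finset.mem_Icc] at hk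
      obtain ⟨hk1, hk2⟩ := hk
      have hkq : k * q ≤ N := (Nat.le_div_iff_mul_le hq).mp hk2
      simp only [Finset.mem_coe, Finset.mem_filter, Finset.mem_Icc]
      refine ⟨⟨by omega, ?_⟩, ?_⟩
      · have : j0 + (k - 1) * q ≤ q + (k - 1) * q := by omega
        have h2 : q + (k - 1) * q = k * q := by
          have : k - 1 + 1 = k := by omega
          calc q + (k - 1) * q = (k - 1 + 1) * q := by ring
          _ = k * q := by rw [this]
        omega
      · have key : 3 * (j0 + (k - 1) * q) - r = (3 * j0 - r) + 3 * ((k - 1) * q) := by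
          have hge : r ≤ 3 * j0 := by omega
          omega
        rw [key]
        exact Nat.dvd_add hj0dvd ⟨3 * (k - 1), by ring⟩)
    (by
      intro a ha b hb hab
      simp only [Finset.coe_Icc, Set.mem_Icc] at ha hb
      have h1 : (a - 1) * q = (b - 1) * q := Nat.add_left_cancel hab
      have := Nat.eq_of_mul_eq_mul_right hq h1
      omega)
  simpa using this

/-- **Counting lemma for the Belyi-scan integrality proofs.**
For a prime `p ≠ 3`, `r ∈ {1,2}`, and `N : ℕ`, the `p`-adic valuation of `N!` is at
most that of `∏_{j=1}^N (3j-r)`; equivalently, the `p`-part of `N!` divides the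
product. -/
theorem padic_valuation_factorial_le_three_j_sub_r
    (p : ℕ) (hp : p.Prime) (hp3 : p ≠ 3) (r : ℕ) (hr : r = 1 ∨ r = 2) (N : ℕ) :
    padicValNat p (Nat.factorial N) ≤ padicValNat p (∏ j ∈ Finset.Icc 1 N, (3 * j - r)) ∧
    p ^ padicValNat p (Nat.factorial N) ∣ ∏ j ∈ Finset.Icc 1 N, (3 * j - r) := by
  haveI : Fact p.Prime := ⟨hp⟩
  set b := 3 * N + 1 with hb_def
  have hterm : ∀ j ∈ Finset.Icc 1 N, 3 * j - r ≠ 0 := by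
    intro j hj
    simp only [Finset.mem_Icc] at hj
    omega
  have hprod_ne : (∏ j ∈ Finset.Icc 1 N, (3 * j - r)) ≠ 0 :=
    Finset.prod_ne_zero_iff.mpr hterm
  -- Legendre
  have hleg : padicValNat p (Nat.factorial N) = ∑ i ∈ Finset.Ico 1 b, N / p ^ i :=
    padicValNat_factorial (by
      have := Nat.log_le_self p N
      omega)
  -- valuation of the product as a double count
  have hval_term : ∀ j ∈ Finset.Icc 1 N,
      padicValNat p (3 * j - r)
        = ((Finset.Ico 1 b).filter (fun ℓ => p ^ ℓ ∣ 3 * j - r)).card := by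
    intro j hj
    simp only [Finset.mem_Icc] at hj
    set m := 3 * j - r with hm_def
    have hm : m ≠ 0 := by omega
    set v := padicValNat p m with hv_def
    have hvb : v < b := by
      have hdvd : p ^ v ∣ m := pow_padicValNat_dvd
      have h1 : p ^ v ≤ m := Nat.le_of_dvd (by omega) hdvd
      have h2 : v < p ^ v := Nat.lt_pow_self (n := v) hp.one_lt
      omega
    have hfilter : (Finset.Ico 1 b).filter (fun ℓ => p ^ ℓ ∣ m) = Finset.Icc 1 v := by
      ext ℓ
      simp only [Finset.mem_filter, Finset.mem_Ico, Finset.mem_Icc]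
      have hiff : p ^ ℓ ∣ m ↔ ℓ ≤ v := by
        rw [hv_def, ← Nat.factorization_def m hp]
        exact hp.pow_dvd_iff_le_factorization hm
      rw [hiff]
      omega
    rw [hfilter, Nat.card_Icc]
    omega
  have hval_prod : padicValNat p (∏ j ∈ Finset.Icc 1 N, (3 * j - r))
      = ∑ j ∈ Finset.Icc 1 N, padicValNat p (3 * j - r) := by
    rw [← Nat.factorization_def _ hp, Nat.factorization_prod hterm]
    rw [Finsupp.finset_sum_apply]
    exact Finset.sum_congr rfl fun j hj => Nat.factorization_def _ hp
  have hmain : padicValNat p (Nat.factorial N)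
      ≤ padicValNat p (∏ j ∈ Finset.Icc 1 N, (3 * j - r)) := by
    rw [hval_prod, hleg]
    calc ∑ i ∈ Finset.Ico 1 b, N / p ^ i
        ≤ ∑ ℓ ∈ Finset.Ico 1 b,
            ((Finset.Icc 1 N).filter (fun j => p ^ ℓ ∣ 3 * j - r)).card := by
          exact Finset.sum_le_sum fun ℓ _ => count_ge p N r ℓ hp hp3 hr
      _ = ∑ ℓ ∈ Finset.Ico 1 b, ∑ j ∈ Finset.Icc 1 N,
            (if p ^ ℓ ∣ 3 * j - r then 1 else 0) := by
          exact Finset.sum_congr rfl fun ℓ _ => Finset.card_filter _ _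
      _ = ∑ j ∈ Finset.Icc 1 N, ∑ ℓ ∈ Finset.Ico 1 b,
            (if p ^ ℓ ∣ 3 * j - r then 1 else 0) := Finset.sum_comm
      _ = ∑ j ∈ Finset.Icc 1 N,
            ((Finset.Ico 1 b).filter (fun ℓ => p ^ ℓ ∣ 3 * j - r)).card := by
          exact Finset.sum_congr rfl fun j _ => (Finset.card_filter _ _).symm
      _ = ∑ j ∈ Finset.Icc 1 N, padicValNat p (3 * j - r) := by
          exact Finset.sum_congr rfl fun j hj => (hval_term j hj).symm
  refine ⟨hmain, ?_⟩
  exact dvd_trans (pow_dvd_pow p hmain) pow_padicValNat_dvd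
end

section
/- For every natural number m, the factorial (2m+1)! divides 3^m · ∏_{j=1}^{2m} (3j − 2). -/
open Finset

lemma count_key_aux (m q : ℕ) (hq : 2 ≤ q) (h3 : ¬ (3 ∣ q)) :
    (2*m+1)/q ≤ #{j ∈ Finset.Icc 1 (2*m) | q ∣ 3*j - 2} := by
  have hcop : Nat.Coprime 3 q := (Nat.Prime.coprime_iff_not_dvd Nat.prime_three).2 h3
  obtain ⟨x, -, hx⟩ := Nat.exists_mul_mod_eq_one_of_coprime hcop (by omega)
  obtain ⟨r', hr1, hrq, hdvd⟩ : ∃ r', 1 ≤ r' ∧ r' ≤ q ∧ q ∣ 3 * r' - 2 := by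
    set r0 := (2*x) % q with hr0
    have hmod : (3 * r0) % q = 2 % q := by
      have h1 : (3 * r0) % q = (3*(2*x)) % q := by
        rw [hr0, Nat.mul_mod, Nat.mod_mod_of_dvd _ dvd_rfl, ← Nat.mul_mod]
      have h2 : (3 * (2*x)) % q = 2 % q := by
        have h6 : 3 * (2 * x) = 2 * (3 * x) := by ring
        rw [h6, Nat.mul_mod, hx, mul_one, Nat.mod_mod_of_dvd _ dvd_rfl]
      omega
    by_cases h0 : r0 = 0
    · have hq2 : q ∣ 2 := by
        rw [h0, Nat.mul_zero, Nat.zero_mod] at hmod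
        exact Nat.dvd_of_mod_eq_zero hmod.symm
      have hq2' : q = 2 := le_antisymm (Nat.le_of_dvd (by norm_num) hq2) hq
      subst hq2'
      exact ⟨2, by norm_num, le_refl _, by norm_num⟩
    · refine ⟨r0, by omega, le_of_lt (Nat.mod_lt _ (by omega)), ?_⟩
      have h2r : 2 ≤ 3 * r0 := by omega
      exact (Nat.modEq_iff_dvd' h2r).1 hmod.symm
  set M := (2*m+1)/q with hM
  have hcard : (Finset.Icc 1 M).card = M := by simp
  rw [← hcard]
  apply Finset.card_le_card_of_injOn (fun k => (k-1)*q + r')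
  · intro k hk
    simp only [Finset.mem_coe, Finset.mem_Icc] at hk
    obtain ⟨hk1, hkM⟩ := hk
    have hkq : (k-1)*q + q = k*q := by
      obtain ⟨k', rfl⟩ : ∃ k', k = k' + 1 := ⟨k - 1, by omega⟩
      simp [Nat.add_mul]
    have hle : (k-1)*q + r' ≤ k*q := by omega
    have hMq : k*q ≤ 2*m+1 := le_trans (Nat.mul_le_mul_right q hkM) (Nat.div_mul_le_self _ _)
    have hdvd2 : q ∣ 3 * ((k-1)*q + r') - 2 := by
      have heq : 3 * ((k-1)*q + r') - 2 = 3*(k-1)*q + (3 * r' - 2) := by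
        have h2r : 2 ≤ 3 * r' := by omega
        have hexp : 3 * ((k-1)*q + r') = 3*(k-1)*q + 3*r' := by ring
        omega
      rw [heq]
      exact Nat.dvd_add (dvd_mul_left q (3*(k-1))) hdvd
    have hne : (k-1)*q + r' ≠ 2*m+1 := by
      intro hbad
      have hkq2 : k * q = 2*m+1 := by omega
      have hq1 : q ∣ 2*m+1 := Dvd.intro_left k hkq2
      have hq6 : q ∣ 6*m+1 := by
        have heq2 : 3 * ((k-1)*q + r') - 2 = 6*m+1 := by omega
        exact heq2 ▸ hdvd2
      have hq63 : q ∣ 6*m+3 := by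
        obtain ⟨c, hc⟩ := hq1
        refine ⟨3*c, ?_⟩
        have h63 : 6*m+3 = 3*(2*m+1) := by ring
        rw [h63, hc]; ring
      have hqd2 : q ∣ 2 := by
        have := Nat.dvd_sub hq63 hq6
        simpa using this
      have hq2' : q = 2 := le_antisymm (Nat.le_of_dvd (by norm_num) hqd2) hq
      obtain ⟨c, hc⟩ := hq1
      rw [hq2'] at hc
      omega
    have hub : (k-1)*q + r' ≤ 2*m := by omega
    simp only [Finset.mem_coe, Finset.mem_filter, Finset.mem_Icc]
    exact ⟨⟨by omega, hub⟩, hdvd2⟩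
  · intro a ha b hb hab
    simp only [Finset.coe_Icc, Set.mem_Icc] at ha hb
    change (a-1)*q + r' = (b-1)*q + r' at hab
    have h1 : (a-1)*q = (b-1)*q := Nat.add_right_cancel hab
    have := Nat.eq_of_mul_eq_mul_right (show 0 < q by omega) h1
    omega

/-- **Integrality for row #3 of the Belyi-pullback scan.**
For every natural number `m`, the factorial `(2m+1)!` divides
`3^m · ∏_{j=1}^{2m} (3j-2)`. -/
theorem factorial_dvd_three_pow_mul_prod (m : ℕ) :
    Nat.factorial (2 * m + 1) ∣ 3 ^ m * ∏ j ∈ Finset.Icc 1 (2 * m), (3 * j - 2) := by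
  set P := ∏ j ∈ Finset.Icc 1 (2*m), (3*j - 2) with hP
  have hterm : ∀ j ∈ Finset.Icc 1 (2*m), 3*j - 2 ≠ 0 := by
    intro j hj; simp only [Finset.mem_Icc] at hj; omega
  have hP0 : P ≠ 0 := Finset.prod_ne_zero_iff.mpr hterm
  have h30 : (3:ℕ)^m ≠ 0 := by positivity
  have hN0 : 3^m * P ≠ 0 := mul_ne_zero h30 hP0
  rw [← Nat.factorization_le_iff_dvd (Nat.factorial_ne_zero _) hN0]
  rw [Finsupp.le_def]
  intro p
  by_cases hp : p.Prime
  swap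
  · simp [Nat.factorization_eq_zero_of_not_prime _ hp]
  have hmul : (3^m * P).factorization p = (3^m).factorization p + P.factorization p := by
    rw [Nat.factorization_mul h30 hP0]; simp
  rw [hmul]
  by_cases hp3 : p = 3
  · subst hp3
    have hlog : Nat.log 3 (2*m+1) < 2*m+2 := by
      apply Nat.log_lt_of_lt_pow (by omega)
      calc 2*m+1 < 3^(2*m+1) := Nat.lt_pow_self (by norm_num)
        _ ≤ 3^(2*m+2) := Nat.pow_le_pow_right (by norm_num) (by omega)
    have hfac : ((2*m+1).factorial).factorization 3 ≤ m := by
      have hdvd := Nat.ordProj_dvd ((2*m+1).factorial) 3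
      have h1 := (Nat.Prime.pow_dvd_factorial_iff (p:=3) (n:=2*m+1) (b:=2*m+2)
        Nat.prime_three hlog).mp hdvd
      have hgeo := Nat.geom_sum_Ico_le (b:=3) (by norm_num) (2*m+1) (2*m+2)
      omega
    have h2 : m ≤ (3^m).factorization 3 := by
      rw [Nat.Prime.factorization_pow Nat.prime_three]
      simp
    omega
  · -- p ≠ 3
    have hlog : Nat.log p (2*m+1) < 6*m+2 := by
      apply Nat.log_lt_of_lt_pow (by omega)
      calc 2*m+1 < p^(2*m+1) := Nat.lt_pow_self hp.one_lt
        _ ≤ p^(6*m+2) := Nat.pow_le_pow_right hp.pos (by omega)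
    have hple : ((2*m+1).factorial).factorization p ≤ ∑ i ∈ Finset.Ico 1 (6*m+2), (2*m+1)/p^i := by
      have hdvd := Nat.ordProj_dvd ((2*m+1).factorial) p
      exact (Nat.Prime.pow_dvd_factorial_iff hp hlog).mp hdvd
    have hcardfact : ∀ j ∈ Finset.Icc 1 (2*m),
        ((3*j-2).factorization p) = #{i ∈ Finset.Ico 1 (6*m+2) | p^i ∣ 3*j-2} := by
      intro j hj
      simp only [Finset.mem_Icc] at hj
      have hn0 : 3*j-2 ≠ 0 := by omega
      have hb : 3*j-2 ≤ p^(6*m+1) := by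
        calc 3*j-2 ≤ 6*m+1 := by omega
          _ ≤ p^(6*m+1) := le_of_lt (Nat.lt_pow_self hp.one_lt)
      rw [Nat.factorization_eq_card_pow_dvd _ hp, Nat.Ico_filter_pow_dvd_eq hp hn0 hb,
        ← Finset.Ico_add_one_right_eq_Icc]
      rfl
    have hstep : ∑ i ∈ Finset.Ico 1 (6*m+2), (2*m+1)/p^i ≤ P.factorization p := by
      calc ∑ i ∈ Finset.Ico 1 (6*m+2), (2*m+1)/p^i
          ≤ ∑ i ∈ Finset.Ico 1 (6*m+2), #{j ∈ Finset.Icc 1 (2*m) | p^i ∣ 3*j-2} := by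
            apply Finset.sum_le_sum
            intro i hi
            simp only [Finset.mem_Ico] at hi
            have h2q : 2 ≤ p^i := le_trans hp.two_le (Nat.le_self_pow (by omega) p)
            have h3q : ¬ (3 ∣ p^i) := by
              intro hdd
              have := Nat.Prime.dvd_of_dvd_pow Nat.prime_three hdd
              exact hp3 ((Nat.prime_dvd_prime_iff_eq Nat.prime_three hp).mp this).symm
            exact count_key_aux m (p^i) h2q h3q
        _ = ∑ i ∈ Finset.Ico 1 (6*m+2), ∑ j ∈ Finset.Icc 1 (2*m),
              (if p^i ∣ 3*j-2 then 1 else 0) :=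
            Finset.sum_congr rfl (fun i _ => Finset.card_filter _ _)
        _ = ∑ j ∈ Finset.Icc 1 (2*m), ∑ i ∈ Finset.Ico 1 (6*m+2),
              (if p^i ∣ 3*j-2 then 1 else 0) := Finset.sum_comm
        _ = ∑ j ∈ Finset.Icc 1 (2*m), #{i ∈ Finset.Ico 1 (6*m+2) | p^i ∣ 3*j-2} :=
            Finset.sum_congr rfl (fun j _ => (Finset.card_filter _ _).symm)
        _ = ∑ j ∈ Finset.Icc 1 (2*m), (3*j-2).factorization p :=
            Finset.sum_congr rfl (fun j hj => (hcardfact j hj).symm)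
        _ = P.factorization p := by
            rw [hP, Nat.factorization_prod hterm, Finsupp.finset_sum_apply]
    exact le_trans (le_trans hple hstep) (Nat.le_add_left _ _)
end

section
/- For every natural number m and for each r ∈ {1, 2}, the factorial m! divides 9^m · ∏_{j=1}^{m} (3j − r). -/
open Finset

private lemma aux_count_modEq (m q v : ℕ) (hq : 0 < q) :
    m / q ≤ ((Finset.Icc 1 m).filter (fun j => j % q = v % q)).card := by
  have key := Finset.card_le_card_of_injOn
    (fun k => k * q + (if v % q = 0 then q else v % q))
    (s := Finset.range (m / q))
    (t := (Finset.Icc 1 m).filter (fun j => j % q = v % q)) ?_ ?_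
  · simpa using key
  · intro k hk
    simp only [Finset.mem_coe, Finset.mem_range] at hk
    set t := if v % q = 0 then q else v % q with ht
    have ht1 : 1 ≤ t := by rw [ht]; split <;> omega
    have htq : t ≤ q := by
      rw [ht]; split
      · exact le_rfl
      · exact le_of_lt (Nat.mod_lt _ hq)
    have hle : k * q + t ≤ m := by
      have h1 : (k + 1) * q ≤ (m / q) * q := Nat.mul_le_mul_right _ hk
      have h2 : (m / q) * q ≤ m := Nat.div_mul_le_self m q
      have h3 : k * q + t ≤ (k + 1) * q := by rw [add_mul, one_mul]; omega
      omega
    have hmod : (k * q + t) % q = v % q := by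
      rw [add_comm, Nat.add_mul_mod_self_right]
      rw [ht]; split
      · simp [Nat.mod_self]; omega
      · exact Nat.mod_eq_of_lt (Nat.mod_lt _ hq)
    simp only [Finset.mem_coe, Finset.mem_filter, Finset.mem_Icc]
    exact ⟨⟨by omega, hle⟩, hmod⟩
  · intro a _ b _ h
    simp only at h
    have : a * q = b * q := by omega
    exact Nat.eq_of_mul_eq_mul_right hq this

/-- For `q` coprime to 3 and `1 < q`, at least `m / q` of the numbers `3*j - r`, `j ∈ [1,m]`,
are divisible by `q`. -/
private lemma aux_count_dvd (m r q : ℕ) (hr3 : r < 3) (hq : 1 < q) (hcop : Nat.Coprime 3 q) :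
    m / q ≤ ((Finset.Icc 1 m).filter (fun j => q ∣ 3 * j - r)).card := by
  obtain ⟨c, -, hc⟩ := Nat.exists_mul_mod_eq_one_of_coprime hcop hq
  have hq0 : 0 < q := by omega
  refine le_trans (aux_count_modEq m q (c * r) hq0) (Finset.card_le_card ?_)
  intro j hj
  simp only [Finset.mem_filter, Finset.mem_Icc] at hj ⊢
  refine ⟨hj.1, ?_⟩
  have hmodeq : j ≡ c * r [MOD q] := by
    have := hj.2
    unfold Nat.ModEq
    omega
  have h3c : 3 * c ≡ 1 [MOD q] := by
    have : 1 % q = 1 := Nat.mod_eq_of_lt hq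
    unfold Nat.ModEq
    omega
  have h3j : 3 * j ≡ r [MOD q] := by
    calc 3 * j ≡ 3 * (c * r) [MOD q] := hmodeq.mul_left 3
      _ = (3 * c) * r := by ring
      _ ≡ 1 * r [MOD q] := h3c.mul_right r
      _ = r := by ring
  have hle : r ≤ 3 * j := by have := hj.1.1; omega
  exact (Nat.modEq_iff_dvd' hle).mp h3j.symm

/-- **Integrality for rows #5 and #13 of the Belyi-pullback scan.**
For every natural number `m` and each `r ∈ {1,2}`, the factorial `m!` divides
`9^m · ∏_{j=1}^m (3j-r)`. -/
theorem factorial_dvd_nine_pow_mul_prod (m r : ℕ) (hr : r = 1 ∨ r = 2) :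
    Nat.factorial m ∣ 9 ^ m * ∏ j ∈ Finset.Icc 1 m, (3 * j - r) := by
  have hr3 : r < 3 := by omega
  set P := ∏ j ∈ Finset.Icc 1 m, (3 * j - r) with hP
  have hfac : ∀ j ∈ Finset.Icc 1 m, 3 * j - r ≠ 0 := by
    intro j hj
    simp only [Finset.mem_Icc] at hj
    omega
  have hP0 : P ≠ 0 := Finset.prod_ne_zero_iff.mpr hfac
  have h90 : (9 : ℕ) ^ m ≠ 0 := pow_ne_zero _ (by norm_num)
  rw [← Nat.factorization_le_iff_dvd m.factorial_ne_zero (mul_ne_zero h90 hP0),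
    Finsupp.le_def]
  intro p
  by_cases hp : p.Prime
  swap
  · simp [Nat.factorization_eq_zero_of_not_prime _ hp]
  haveI : Fact p.Prime := ⟨hp⟩
  rw [Nat.factorization_mul h90 hP0]
  simp only [Finsupp.coe_add, Pi.add_apply]
  by_cases hp3 : p = 3
  · -- use the 9^m part
    subst hp3
    have h9 : ((9 : ℕ) ^ m).factorization 3 = 2 * m := by
      have h99 : (9 : ℕ) ^ m = 3 ^ (2 * m) := by
        rw [show (9 : ℕ) = 3 ^ 2 by norm_num, ← pow_mul]
      rw [h99, Nat.Prime.factorization_pow hp, Finsupp.single_eq_same]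
    have hleg := sub_one_mul_padicValNat_factorial (p := 3) m
    have hval : (Nat.factorial m).factorization 3 = padicValNat 3 (Nat.factorial m) :=
      Nat.factorization_def _ hp
    omega
  · -- use the product part
    have hple : (Nat.factorial m).factorization p ≤ P.factorization p := by
      set b := Nat.log p m + 1 with hb
      have hlog : Nat.log p m < b := by omega
      have hleg : (Nat.factorial m).factorization p = ∑ i ∈ Finset.Ico 1 b, m / p ^ i := by
        rw [Nat.factorization_def _ hp, padicValNat_factorial hlog]
      rw [hleg]
      have step1 : ∑ i ∈ Finset.Ico 1 b, m / p ^ i ≤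
          ∑ i ∈ Finset.Ico 1 b,
            ((Finset.Icc 1 m).filter (fun j => p ^ i ∣ 3 * j - r)).card := by
        refine Finset.sum_le_sum ?_
        intro i hi
        simp only [Finset.mem_Ico] at hi
        have hq : 1 < p ^ i := Nat.one_lt_pow (by omega) hp.one_lt
        have hcop : Nat.Coprime 3 (p ^ i) := by
          have : Nat.Coprime 3 p := by
            rw [Nat.coprime_primes (by norm_num) hp]
            exact fun h => hp3 h.symm
          exact this.pow_right i
        exact aux_count_dvd m r (p ^ i) hr3 hq hcop
      have step2 : ∑ i ∈ Finset.Ico 1 b,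
            ((Finset.Icc 1 m).filter (fun j => p ^ i ∣ 3 * j - r)).card
          ≤ P.factorization p := by
        have hswap : ∑ i ∈ Finset.Ico 1 b,
              ((Finset.Icc 1 m).filter (fun j => p ^ i ∣ 3 * j - r)).card
            = ∑ j ∈ Finset.Icc 1 m,
              ((Finset.Ico 1 b).filter (fun i => p ^ i ∣ 3 * j - r)).card := by
          simp only [Finset.card_filter]
          exact Finset.sum_comm
        rw [hswap]
        have hprod : P.factorization p
            = ∑ j ∈ Finset.Icc 1 m, (3 * j - r).factorization p := by
          rw [hP, Nat.factorization_prod hfac]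
          simp [Finsupp.finset_sum_apply]
        rw [hprod]
        refine Finset.sum_le_sum ?_
        intro j hj
        have hn0 : 3 * j - r ≠ 0 := hfac j hj
        have hsub : (Finset.Ico 1 b).filter (fun i => p ^ i ∣ 3 * j - r)
            ⊆ Finset.Icc 1 ((3 * j - r).factorization p) := by
          intro i hi
          simp only [Finset.mem_filter, Finset.mem_Ico] at hi
          simp only [Finset.mem_Icc]
          exact ⟨hi.1.1, (hp.pow_dvd_iff_le_factorization hn0).mp hi.2⟩
        calc ((Finset.Ico 1 b).filter (fun i => p ^ i ∣ 3 * j - r)).card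
            ≤ (Finset.Icc 1 ((3 * j - r).factorization p)).card :=
              Finset.card_le_card hsub
          _ = (3 * j - r).factorization p := by rw [Nat.card_Icc]; omega
      exact le_trans step1 step2
    omega
end
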